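/- arXiv:2601.08963 — 3 statements merged into one kernel-verified Lean document; each statement's English description precedes it below -/
import Mathlib

section
/- Under the uniform bounds ‖J_F(z)‖₂ ≤ κ < 1, ‖H_{F,i}(z)‖_op ≤ B, ‖r(z)‖ ≤ R_max on a region Z, if (1-κ)²/σ² > C_B where C_B = R_max√d·B/σ², then g(z) = (1/(2σ²))‖z - x + F(z)‖² is m-strongly convex on Z with m = (1-κ)²/σ² - C_B > 0. -/
open scoped RealInnerProductSpace

set_option maxHeartbeats 1000000 in
/-- Under the uniform bounds `‖J_F(z)‖₂ ≤ κ < 1`, `‖H_{F,i}(z)‖_op ≤ B`,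
`‖r(z)‖ ≤ R_max` on a region `Z`, if `(1-κ)²/σ² > C_B` with `C_B = R_max √d B / σ²`,
then `g` is `m`-strongly convex on `Z` with `m = (1-κ)²/σ² - C_B > 0`
(i.e. `∇²g(z) ⪰ m I` for all `z ∈ Z`). -/
theorem strong_convexity_constant_step_size
    (d : ℕ) (σ : ℝ) (hσ : 0 < σ)
    (F : EuclideanSpace ℝ (Fin d) → EuclideanSpace ℝ (Fin d))
    (hF : ContDiff ℝ 2 F)
    (x : EuclideanSpace ℝ (Fin d))
    (Z : Set (EuclideanSpace ℝ (Fin d)))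
    (r : EuclideanSpace ℝ (Fin d) → EuclideanSpace ℝ (Fin d))
    (hr : ∀ w, r w = w - x + F w)
    (g : EuclideanSpace ℝ (Fin d) → ℝ)
    (hg : ∀ w, g w = (1 / (2 * σ ^ 2)) * ‖r w‖ ^ 2)
    (κ B Rmax CB m : ℝ) (hκ1 : κ < 1) (hκ0 : 0 ≤ κ) (hB : 0 ≤ B) (hRmax : 0 ≤ Rmax)
    (hJ : ∀ z ∈ Z, ‖fderiv ℝ F z‖ ≤ κ)
    (hHess : ∀ z ∈ Z, ∀ i : Fin d,
      ‖fderiv ℝ (fun p => fderiv ℝ (fun q => F q i) p) z‖ ≤ B)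
    (hres : ∀ z ∈ Z, ‖r z‖ ≤ Rmax)
    (hCB : CB = Rmax * Real.sqrt d * B / σ ^ 2)
    (hm : m = (1 - κ) ^ 2 / σ ^ 2 - CB)
    (hcond : CB < (1 - κ) ^ 2 / σ ^ 2) :
    0 < m ∧
      ∀ z ∈ Z, ∀ v : EuclideanSpace ℝ (Fin d),
        m * ‖v‖ ^ 2 ≤ ⟪fderiv ℝ (gradient g) z v, v⟫ := by
  have hσ2 : (0:ℝ) < σ ^ 2 := by positivity
  refine ⟨by rw [hm]; linarith, ?_⟩
  intro z hz v
  -- basic differentiability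
  have hFdiff : Differentiable ℝ F := hF.differentiable (by norm_num)
  have hrfun : r = fun w => w - x + F w := funext hr
  have hrC : ContDiff ℝ 2 r := by
    rw [hrfun]; exact (contDiff_id.sub contDiff_const).add hF
  have hrdiff : Differentiable ℝ r := hrC.differentiable (by norm_num)
  have hr'C : ContDiff ℝ 1 (fderiv ℝ r) := hrC.fderiv_right (by norm_num)
  have hr'diff : Differentiable ℝ (fderiv ℝ r) := hr'C.differentiable (by norm_num)
  have hF'diff : Differentiable ℝ (fderiv ℝ F) :=
    (hF.fderiv_right (by norm_num) : ContDiff ℝ 1 (fderiv ℝ F)).differentiable (by norm_num)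
  -- g as inner product
  have hgfun : g = fun w => (1/(2*σ^2)) * ⟪r w, r w⟫ := by
    funext w; rw [hg w, real_inner_self_eq_norm_sq]
  have hgC : ContDiff ℝ 2 g := by
    rw [hgfun]; exact contDiff_const.mul (hrC.inner ℝ hrC)
  have hg'diff : Differentiable ℝ (fderiv ℝ g) :=
    (hgC.fderiv_right (by norm_num) : ContDiff ℝ 1 (fderiv ℝ g)).differentiable (by norm_num)
  -- the derivative of r
  have hr' : ∀ w, fderiv ℝ r w
      = ContinuousLinearMap.id ℝ (EuclideanSpace ℝ (Fin d)) + fderiv ℝ F w := by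
    intro w
    have h1 : HasFDerivAt r
        (ContinuousLinearMap.id ℝ (EuclideanSpace ℝ (Fin d)) + fderiv ℝ F w) w := by
      rw [hrfun]
      exact (((hasFDerivAt_id w).sub_const x).add (hFdiff w).hasFDerivAt)
    exact h1.fderiv
  -- second derivative of r equals that of F
  have hTF : fderiv ℝ (fderiv ℝ r) z = fderiv ℝ (fderiv ℝ F) z := by
    have h2 : fderiv ℝ r = fun w =>
        ContinuousLinearMap.id ℝ (EuclideanSpace ℝ (Fin d)) + fderiv ℝ F w := funext hr'
    rw [h2, fderiv_const_add]
  set T := fderiv ℝ (fderiv ℝ F) z with hTdef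
  -- first derivative of g applied to a vector
  have hdg : ∀ w (u : EuclideanSpace ℝ (Fin d)),
      fderiv ℝ g w u = (1/σ^2) * ⟪r w, fderiv ℝ r w u⟫ := by
    intro w u
    rw [hgfun, fderiv_const_mul ((hrdiff w).inner ℝ (hrdiff w))]
    rw [ContinuousLinearMap.smul_apply, fderiv_inner_apply ℝ (hrdiff w) (hrdiff w)]
    rw [real_inner_comm (fderiv ℝ r w u) (r w)]
    simp only [smul_eq_mul]
    field_simp <;> ring
  -- reduce the goal quantity to the second derivative bilinear form
  have hQ1 : ⟪fderiv ℝ (gradient g) z v, v⟫ = (fderiv ℝ (fderiv ℝ g) z v) v := by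
    set L : StrongDual ℝ (EuclideanSpace ℝ (Fin d)) ≃L[ℝ] EuclideanSpace ℝ (Fin d) :=
      (InnerProductSpace.toDual ℝ (EuclideanSpace ℝ (Fin d))).symm.toContinuousLinearEquiv
      with hLdef
    have hgl : gradient g = fun w =>
        (L : StrongDual ℝ (EuclideanSpace ℝ (Fin d)) →L[ℝ]
          EuclideanSpace ℝ (Fin d)) (fderiv ℝ g w) := rfl
    have hL : HasFDerivAt (fun w =>
        (L : StrongDual ℝ (EuclideanSpace ℝ (Fin d)) →L[ℝ]
          EuclideanSpace ℝ (Fin d)) (fderiv ℝ g w))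
        ((L : StrongDual ℝ (EuclideanSpace ℝ (Fin d)) →L[ℝ]
            EuclideanSpace ℝ (Fin d)).comp (fderiv ℝ (fderiv ℝ g) z)) z :=
      (ContinuousLinearMap.hasFDerivAt _).comp z (hg'diff z).hasFDerivAt
    rw [hgl, hL.fderiv]
    simp only [ContinuousLinearMap.coe_comp', Function.comp_apply,
      ContinuousLinearEquiv.coe_coe]
    exact InnerProductSpace.toDual_symm_apply
  have hQ2 : fderiv ℝ (fun w => fderiv ℝ g w v) z v = (fderiv ℝ (fderiv ℝ g) z v) v := by
    rw [fderiv_clm_apply (hg'diff z) (differentiableAt_const v)]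
    simp
  -- differentiability of w ↦ (fderiv r w) v
  have happdiff : Differentiable ℝ (fun w => fderiv ℝ r w v) := fun w =>
    (hr'diff w).clm_apply (differentiableAt_const v)
  have happ' : fderiv ℝ (fun w => fderiv ℝ r w v) z = (fderiv ℝ (fderiv ℝ r) z).flip v := by
    rw [fderiv_clm_apply (hr'diff z) (differentiableAt_const v)]
    simp
  -- explicit second derivative formula
  have hQ3 : fderiv ℝ (fun w => fderiv ℝ g w v) z v
      = (1/σ^2) * (⟪r z, (T v) v⟫ + ⟪fderiv ℝ r z v, fderiv ℝ r z v⟫) := by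
    have hfun : (fun w => fderiv ℝ g w v) = fun w => (1/σ^2) * ⟪r w, fderiv ℝ r w v⟫ := by
      funext w; exact hdg w v
    rw [hfun, fderiv_const_mul ((hrdiff z).inner ℝ (happdiff z))]
    rw [ContinuousLinearMap.smul_apply, fderiv_inner_apply ℝ (hrdiff z) (happdiff z)]
    rw [happ']
    simp only [smul_eq_mul, ContinuousLinearMap.flip_apply, hTF]
  -- componentwise bound on the second derivative of F
  have hTcoord : ∀ i : Fin d, |((T v) v) i| ≤ B * ‖v‖^2 := by
    intro i
    have hφdiff : Differentiable ℝ (fun q => F q i) := fun p =>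
      ((EuclideanSpace.proj (𝕜 := ℝ) i).differentiableAt).comp p (hFdiff p)
    have hφC : ContDiff ℝ 2 (fun q => F q i) :=
      (EuclideanSpace.proj (𝕜 := ℝ) i).contDiff.comp hF
    have hφ'diff : Differentiable ℝ (fderiv ℝ (fun q => F q i)) :=
      (hφC.fderiv_right (by norm_num) : ContDiff ℝ 1 (fderiv ℝ (fun q => F q i))).differentiable (by norm_num)
    have hev : ∀ p, fderiv ℝ (fun q => F q i) p v = (EuclideanSpace.proj i) (fderiv ℝ F p v) := by
      intro p
      have h0 : fderiv ℝ (fun q => F q i) p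
          = (EuclideanSpace.proj (𝕜 := ℝ) i).comp (fderiv ℝ F p) :=
        (((EuclideanSpace.proj (𝕜 := ℝ) i).hasFDerivAt).comp p (hFdiff p).hasFDerivAt).fderiv
      rw [h0]; rfl
    have hFvdiff : DifferentiableAt ℝ (fun p => fderiv ℝ F p v) z :=
      (hF'diff z).clm_apply (differentiableAt_const v)
    have h1 : fderiv ℝ (fun p => fderiv ℝ (fun q => F q i) p v) z v
        = (fderiv ℝ (fun p => fderiv ℝ (fun q => F q i) p) z v) v := by
      rw [fderiv_clm_apply (hφ'diff z) (differentiableAt_const v)]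
      simp
    have h2 : (fun p => fderiv ℝ (fun q => F q i) p v)
        = fun p => (EuclideanSpace.proj i) (fderiv ℝ F p v) := funext hev
    have h3 : fderiv ℝ (fun p => (EuclideanSpace.proj i) (fderiv ℝ F p v)) z
        = (EuclideanSpace.proj (𝕜 := ℝ) i).comp (fderiv ℝ (fun p => fderiv ℝ F p v) z) :=
      (((EuclideanSpace.proj (𝕜 := ℝ) i).hasFDerivAt).comp z hFvdiff.hasFDerivAt).fderiv
    have h4 : fderiv ℝ (fun p => fderiv ℝ F p v) z v = (T v) v := by
      rw [fderiv_clm_apply (hF'diff z) (differentiableAt_const v)]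
      simp
      rfl
    have h5 : ((T v) v) i = (fderiv ℝ (fun p => fderiv ℝ (fun q => F q i) p) z v) v := by
      rw [← h1, h2, h3]
      simp only [ContinuousLinearMap.coe_comp', Function.comp_apply]
      rw [h4]
      rfl
    rw [h5]
    have h6 : ‖(fderiv ℝ (fun p => fderiv ℝ (fun q => F q i) p) z v) v‖
        ≤ ‖fderiv ℝ (fun p => fderiv ℝ (fun q => F q i) p) z‖ * ‖v‖ * ‖v‖ :=
      ContinuousLinearMap.le_opNorm₂ _ v v
    have h7 : ‖fderiv ℝ (fun p => fderiv ℝ (fun q => F q i) p) z‖ * ‖v‖ * ‖v‖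
        ≤ B * ‖v‖^2 := by
      have := hHess z hz i
      nlinarith [norm_nonneg v]
    calc |(fderiv ℝ (fun p => fderiv ℝ (fun q => F q i) p) z v) v|
        = ‖(fderiv ℝ (fun p => fderiv ℝ (fun q => F q i) p) z v) v‖ := (Real.norm_eq_abs _).symm
      _ ≤ B * ‖v‖^2 := h6.trans h7
  have hTnorm : ‖(T v) v‖ ≤ Real.sqrt d * B * ‖v‖^2 := by
    rw [EuclideanSpace.norm_eq]
    have hsum : ∑ i : Fin d, ‖((T v) v) i‖^2 ≤ ∑ _i : Fin d, (B * ‖v‖^2)^2 := by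
      apply Finset.sum_le_sum
      intro i _
      have := hTcoord i
      rw [Real.norm_eq_abs]
      nlinarith [abs_nonneg (((T v) v) i)]
    calc Real.sqrt (∑ i : Fin d, ‖((T v) v) i‖^2)
        ≤ Real.sqrt (∑ _i : Fin d, (B * ‖v‖^2)^2) := Real.sqrt_le_sqrt hsum
      _ = Real.sqrt (d * (B * ‖v‖^2)^2) := by rw [Finset.sum_const, Finset.card_fin]; ring_nf
      _ = Real.sqrt d * (B * ‖v‖^2) := by
          rw [Real.sqrt_mul (by positivity), Real.sqrt_sq (by positivity)]
      _ = Real.sqrt d * B * ‖v‖^2 := by ring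
  -- lower bound on the inner product term
  have hinner_low : -(Rmax * (Real.sqrt d * B * ‖v‖^2)) ≤ ⟪r z, (T v) v⟫ := by
    have h1 : |⟪r z, (T v) v⟫| ≤ ‖r z‖ * ‖(T v) v‖ := abs_real_inner_le_norm _ _
    have h2 : ‖r z‖ * ‖(T v) v‖ ≤ Rmax * (Real.sqrt d * B * ‖v‖^2) :=
      mul_le_mul (hres z hz) hTnorm (norm_nonneg _) hRmax
    have h3 := neg_abs_le ⟪r z, (T v) v⟫
    linarith
  -- lower bound on the quadratic term
  have hlow : (1-κ)^2 * ‖v‖^2 ≤ ⟪fderiv ℝ r z v, fderiv ℝ r z v⟫ := by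
    rw [real_inner_self_eq_norm_sq]
    have hFv : ‖fderiv ℝ F z v‖ ≤ κ * ‖v‖ :=
      le_trans ((fderiv ℝ F z).le_opNorm v)
        (mul_le_mul_of_nonneg_right (hJ z hz) (norm_nonneg v))
    have hrv : (1-κ) * ‖v‖ ≤ ‖fderiv ℝ r z v‖ := by
      rw [hr' z]
      have hid : (ContinuousLinearMap.id ℝ (EuclideanSpace ℝ (Fin d)) + fderiv ℝ F z) v
          = v + fderiv ℝ F z v := rfl
      rw [hid]
      have h4 : ‖v‖ ≤ ‖v + fderiv ℝ F z v‖ + ‖fderiv ℝ F z v‖ := by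
        calc ‖v‖ = ‖(v + fderiv ℝ F z v) + (-(fderiv ℝ F z v))‖ := by
              rw [add_neg_cancel_right]
          _ ≤ ‖v + fderiv ℝ F z v‖ + ‖-(fderiv ℝ F z v)‖ := norm_add_le _ _
          _ = ‖v + fderiv ℝ F z v‖ + ‖fderiv ℝ F z v‖ := by rw [norm_neg]
      linarith
    have h5 : 0 ≤ (1-κ) * ‖v‖ := mul_nonneg (by linarith) (norm_nonneg v)
    nlinarith [norm_nonneg (fderiv ℝ r z v)]
  -- put everything together
  have hfinal : ⟪fderiv ℝ (gradient g) z v, v⟫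
      = (1/σ^2) * (⟪r z, (T v) v⟫ + ⟪fderiv ℝ r z v, fderiv ℝ r z v⟫) := by
    rw [hQ1, ← hQ2, hQ3]
  rw [hfinal]
  have hstep : (1/σ^2) * ((1-κ)^2*‖v‖^2 - Rmax * (Real.sqrt d * B * ‖v‖^2))
      ≤ (1/σ^2) * (⟪r z, (T v) v⟫ + ⟪fderiv ℝ r z v, fderiv ℝ r z v⟫) := by
    have hc : (0:ℝ) ≤ 1/σ^2 := by positivity
    apply mul_le_mul_of_nonneg_left _ hc
    linarith
  refine le_trans (le_of_eq ?_) hstep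
  rw [hm, hCB]
  field_simp
end

section
/- If a function f : ℝ^d × ℝ^m → ℝ≥0 is jointly log-concave in (z, x) and integrable in x for each z, then the marginal h(z) = ∫ f(z, x) dx is log-concave in z (Prékopa's theorem applied to the reverse transition kernel times the current marginal). -/
open MeasureTheory Set ENNReal NNReal Pointwise


/-- A cofinal sequence inside a nonempty set of reals. -/
lemma exists_cofinal_seq (A : Set ℝ) (hA : A.Nonempty) :
    ∃ u : ℕ → ℝ, (∀ n, u n ∈ A) ∧ ∀ x ∈ A, ∃ n, x ≤ u n := by
  by_cases hb : BddAbove A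
  · by_cases hm : sSup A ∈ A
    · exact ⟨fun _ => sSup A, fun _ => hm, fun x hx => ⟨0, le_csSup hb hx⟩⟩
    · have h1 : ∀ n : ℕ, ∃ a ∈ A, sSup A - 1 / (n + 1) < a := by
        intro n
        have : sSup A - 1 / (n + 1) < sSup A := by
          have : (0:ℝ) < 1 / (n+1) := by positivity
          linarith
        exact exists_lt_of_lt_csSup hA this
      choose u hu hu' using h1
      refine ⟨u, hu, fun x hx => ?_⟩
      have hxlt : x < sSup A :=
        lt_of_le_of_ne (le_csSup hb hx) (fun h => hm (h ▸ hx))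
      obtain ⟨n, hn⟩ := exists_nat_one_div_lt (by linarith : (0:ℝ) < sSup A - x)
      exact ⟨n, le_of_lt (lt_trans (by push_cast at hn ⊢; linarith) (hu' n))⟩
  · have h1 : ∀ n : ℕ, ∃ a ∈ A, (n:ℝ) < a := by
      intro n
      obtain ⟨a, ha, hna⟩ := not_bddAbove_iff.mp hb n
      exact ⟨a, ha, hna⟩
    choose u hu hu' using h1
    refine ⟨u, hu, fun x hx => ?_⟩
    obtain ⟨n, hn⟩ := exists_nat_gt x
    exact ⟨n, le_of_lt (lt_trans hn (hu' n))⟩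

/-- approximation of measure from below by cuts `A ∩ Iic a`, `a ∈ A`. -/
lemma measure_le_iSup_inter_Iic (A : Set ℝ) (hA : A.Nonempty) :
    volume A ≤ ⨆ a : A, volume (A ∩ Iic (a:ℝ)) := by
  obtain ⟨u, hu, hcof⟩ := exists_cofinal_seq A hA
  have hcov : A ⊆ ⋃ n, A ∩ Iic (u n) := by
    intro x hx
    obtain ⟨n, hn⟩ := hcof x hx
    exact Set.mem_iUnion.2 ⟨n, hx, hn⟩
  calc volume A ≤ volume (⋃ n, A ∩ Iic (u n)) := measure_mono hcov
    _ = ⨆ n, volume (accumulate (fun n => A ∩ Iic (u n)) n) :=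
        measure_iUnion_eq_iSup_accumulate
    _ ≤ ⨆ a : A, volume (A ∩ Iic (a:ℝ)) := by
        refine iSup_le fun n => ?_
        -- find a ∈ A dominating u 0, ..., u n
        have : ∃ a ∈ A, ∀ k ≤ n, u k ≤ a := by
          induction n with
          | zero => exact ⟨u 0, hu 0, fun k hk => by simp [Nat.le_zero.mp hk]⟩
          | succ n ih =>
            obtain ⟨a, ha, hak⟩ := ih
            refine ⟨max a (u (n+1)), ?_, fun k hk => ?_⟩
            · rcases max_choice a (u (n+1)) with h | h <;> rw [h]
              exacts [ha, hu (n+1)]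
            · rcases Nat.le_succ_iff.mp hk with h | h
              · exact le_trans (hak k h) (le_max_left _ _)
              · subst h; exact le_max_right _ _
        obtain ⟨a, ha, hak⟩ := this
        refine le_trans (measure_mono ?_) (le_iSup (fun a : A => volume (A ∩ Iic (a:ℝ))) ⟨a, ha⟩)
        intro x hx
        simp only [Set.mem_accumulate] at hx
        obtain ⟨k, hk, hxk, hxk'⟩ := hx
        exact ⟨hxk, le_trans hxk' (hak k hk)⟩

lemma measure_le_iSup_inter_Ici (B : Set ℝ) (hB : B.Nonempty) :
    volume B ≤ ⨆ b : B, volume (B ∩ Ici (b:ℝ)) := by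
  have hnB : (-B).Nonempty := ⟨-hB.choose, by simp [Set.mem_neg, hB.choose_spec]⟩
  have h1 := measure_le_iSup_inter_Iic (-B) hnB
  have hBneg : volume (-B) = volume B := Measure.measure_neg _ _
  have h2 : ∀ a : ℝ, (-B) ∩ Iic a = -(B ∩ Ici (-a)) := by
    intro a
    ext x
    simp only [Set.mem_inter_iff, Set.mem_neg, Set.mem_Iic, Set.mem_Ici]
    constructor
    · rintro ⟨h1, h2⟩; exact ⟨h1, by linarith⟩
    · rintro ⟨h1, h2⟩; exact ⟨h1, by linarith⟩
  calc volume B = volume (-B) := hBneg.symm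
    _ ≤ ⨆ a : ↥(-B), volume ((-B) ∩ Iic (a:ℝ)) := h1
    _ ≤ ⨆ b : B, volume (B ∩ Ici (b:ℝ)) := by
        refine iSup_le fun a => ?_
        have ha : -(a:ℝ) ∈ B := a.2
        rw [h2, Measure.measure_neg]
        exact le_iSup (fun b : B => volume (B ∩ Ici (b:ℝ))) ⟨-(a:ℝ), ha⟩

/-- 1-D sumset superadditivity of Lebesgue (outer) measure. -/
lemma volume_add_le_volume_sumset (A B : Set ℝ) (hA : A.Nonempty) (hB : B.Nonempty) :
    volume A + volume B ≤ volume (A + B) := by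
  have step : ∀ a ∈ A, ∀ b ∈ B,
      volume (A ∩ Iic a) + volume (B ∩ Ici b) ≤ volume (A + B) := by
    intro a ha b hb
    set X : Set ℝ := b +ᵥ (A ∩ Iic a) with hX
    set Y : Set ℝ := a +ᵥ (B ∩ Ici b) with hY
    have hXsub : X ⊆ A + B := by
      rintro _ ⟨x, ⟨hxA, _⟩, rfl⟩
      exact ⟨x, hxA, b, hb, by simp [vadd_eq_add]; ring⟩
    have hYsub : Y ⊆ A + B := by
      rintro _ ⟨y, ⟨hyB, _⟩, rfl⟩
      exact ⟨a, ha, y, hyB, rfl⟩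
    have hXle : ∀ x ∈ X, x ≤ a + b := by
      rintro _ ⟨x, ⟨_, hx⟩, rfl⟩
      simpa using by linarith [Set.mem_Iic.mp hx]
    have hYge : ∀ y ∈ Y, a + b ≤ y := by
      rintro _ ⟨y, ⟨_, hy⟩, rfl⟩
      simpa using by linarith [Set.mem_Ici.mp hy]
    have hvX : volume X = volume (A ∩ Iic a) := measure_vadd _ _ _
    have hvY : volume Y = volume (B ∩ Ici b) := measure_vadd _ _ _
    have key : volume X + volume Y ≤ volume (X ∪ Y) := by
      have hsplit := measure_inter_add_diff (μ := volume) (X ∪ Y) (measurableSet_Iio (a := a + b))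
      have h1 : X \ {a + b} ⊆ (X ∪ Y) ∩ Iio (a + b) := by
        rintro x ⟨hx, hxne⟩
        exact ⟨Or.inl hx, lt_of_le_of_ne (hXle x hx) (by simpa using hxne)⟩
      have h2 : Y ⊆ (X ∪ Y) \ Iio (a + b) := by
        intro y hy
        exact ⟨Or.inr hy, not_lt.2 (hYge y hy)⟩
      have hXdiff : volume X = volume (X \ {a + b}) :=
        (measure_diff_null (by simp)).symm
      calc volume X + volume Y = volume (X \ {a+b}) + volume Y := by rw [← hXdiff]
        _ ≤ volume ((X ∪ Y) ∩ Iio (a+b)) + volume ((X ∪ Y) \ Iio (a+b)) :=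
            add_le_add (measure_mono h1) (measure_mono h2)
        _ = volume (X ∪ Y) := hsplit
    calc volume (A ∩ Iic a) + volume (B ∩ Ici b) = volume X + volume Y := by rw [hvX, hvY]
      _ ≤ volume (X ∪ Y) := key
      _ ≤ volume (A + B) := measure_mono (Set.union_subset hXsub hYsub)
  have : Nonempty A := hA.to_subtype
  have : Nonempty B := hB.to_subtype
  calc volume A + volume B
      ≤ (⨆ a : A, volume (A ∩ Iic (a:ℝ))) + ⨆ b : B, volume (B ∩ Ici (b:ℝ)) :=
        add_le_add (measure_le_iSup_inter_Iic A hA) (measure_le_iSup_inter_Ici B hB)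
    _ = ⨆ a : A, (volume (A ∩ Iic (a:ℝ)) + ⨆ b : B, volume (B ∩ Ici (b:ℝ))) :=
        ENNReal.iSup_add _
    _ = ⨆ a : A, ⨆ b : B, (volume (A ∩ Iic (a:ℝ)) + volume (B ∩ Ici (b:ℝ))) := by
        exact iSup_congr fun a => ENNReal.add_iSup _
    _ ≤ volume (A + B) := iSup_le fun a => iSup_le fun b => step a a.2 b b.2

/-- Layer-cake for ENNReal-valued measurable functions on ℝ. -/
lemma lintegral_eq_layercake (φ : ℝ → ℝ≥0∞) (hφ : Measurable φ) :
    ∫⁻ x, φ x = ∫⁻ s in Ioi (0:ℝ), volume {x | ENNReal.ofReal s < φ x} := by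
  have key : ∀ x, φ x
      = ∫⁻ s in Ioi (0:ℝ), (if ENNReal.ofReal s < φ x then (1:ℝ≥0∞) else 0) := by
    intro x
    set c := φ x with hc
    have hmS : MeasurableSet {s : ℝ | ENNReal.ofReal s < c} :=
      measurableSet_lt ENNReal.measurable_ofReal measurable_const
    have : ∫⁻ s in Ioi (0:ℝ), (if ENNReal.ofReal s < c then (1:ℝ≥0∞) else 0)
        = volume ({s : ℝ | ENNReal.ofReal s < c} ∩ Ioi 0) := by
      rw [← Measure.restrict_apply hmS, ← lintegral_indicator_one hmS]
      congr 1
      ext s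
      simp [Set.indicator_apply]
    rw [this]
    rcases eq_or_ne c ⊤ with hctop | hctop
    · have : {s : ℝ | ENNReal.ofReal s < c} ∩ Ioi 0 = Ioi 0 := by
        ext s; simp [hctop]
      rw [this, hctop]
      simp [Real.volume_Ioi]
    · have : {s : ℝ | ENNReal.ofReal s < c} ∩ Ioi 0 = Ioo 0 c.toReal := by
        ext s
        simp only [Set.mem_inter_iff, Set.mem_setOf_eq, Set.mem_Ioi, Set.mem_Ioo]
        constructor
        · rintro ⟨h1, h2⟩
          exact ⟨h2, (ENNReal.ofReal_lt_iff_lt_toReal (le_of_lt h2) hctop).mp h1⟩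
        · rintro ⟨h1, h2⟩
          exact ⟨(ENNReal.ofReal_lt_iff_lt_toReal (le_of_lt h1) hctop).mpr h2, h1⟩
      rw [this, Real.volume_Ioo, sub_zero, ENNReal.ofReal_toReal hctop]
  calc ∫⁻ x, φ x
      = ∫⁻ x, ∫⁻ s in Ioi (0:ℝ), (if ENNReal.ofReal s < φ x then (1:ℝ≥0∞) else 0) := by
        exact lintegral_congr key
    _ = ∫⁻ s in Ioi (0:ℝ), ∫⁻ x, (if ENNReal.ofReal s < φ x then (1:ℝ≥0∞) else 0) := by
        apply lintegral_lintegral_swap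
        apply Measurable.aemeasurable
        have hT : MeasurableSet {p : ℝ × ℝ | ENNReal.ofReal p.2 < φ p.1} :=
          measurableSet_lt (ENNReal.measurable_ofReal.comp measurable_snd)
            (hφ.comp measurable_fst)
        exact Measurable.ite hT measurable_const measurable_const
    _ = ∫⁻ s in Ioi (0:ℝ), volume {x | ENNReal.ofReal s < φ x} := by
        refine lintegral_congr fun s => ?_
        have hm : MeasurableSet {x : ℝ | ENNReal.ofReal s < φ x} :=
          measurableSet_lt measurable_const hφ
        rw [← lintegral_indicator_one hm]
        congr 1
        ext x
        simp [Set.indicator_apply]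

/-- substitution `u = c * s` in a lintegral over `(0, ∞)`. -/
lemma lintegral_Ioi_comp_mul_left {c : ℝ} (hc : 0 < c) (φ : ℝ → ℝ≥0∞) (hφ : Measurable φ) :
    ∫⁻ u in Ioi (0:ℝ), φ u = ENNReal.ofReal c * ∫⁻ s in Ioi (0:ℝ), φ (c * s) := by
  have hmap : Measure.map (fun x => c * x) volume = ENNReal.ofReal |c⁻¹| • volume :=
    Real.map_volume_mul_left hc.ne'
  have hpre : (fun x => c * x) ⁻¹' Ioi (0:ℝ) = Ioi 0 := by
    ext x; simp only [Set.mem_preimage, Set.mem_Ioi]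
    constructor
    · intro h; nlinarith
    · intro h; positivity
  have h1 : ∫⁻ u in Ioi (0:ℝ), φ u ∂(Measure.map (fun x => c * x) volume)
      = ∫⁻ s in Ioi (0:ℝ), φ (c * s) := by
    rw [setLIntegral_map measurableSet_Ioi hφ (measurable_const_mul c), hpre]
  rw [hmap] at h1
  rw [Measure.restrict_smul, lintegral_smul_measure, smul_eq_mul] at h1
  rw [← h1, ← mul_assoc, ← ENNReal.ofReal_mul hc.le, abs_of_pos (by positivity : (0:ℝ) < c⁻¹),
    mul_inv_cancel₀ hc.ne', ENNReal.ofReal_one, one_mul]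

/-- Weighted AM–GM in `ℝ≥0∞`. -/
lemma ennreal_geom_mean_le {t : ℝ} (ht0 : 0 < t) (ht1 : t < 1) (a b : ℝ≥0∞) :
    a ^ t * b ^ (1 - t) ≤ ENNReal.ofReal t * a + ENNReal.ofReal (1 - t) * b := by
  have h1t : 0 < 1 - t := by linarith
  rcases eq_or_ne a ⊤ with rfl | ha
  · rcases eq_or_ne b 0 with rfl | hb
    · rw [ENNReal.zero_rpow_of_pos h1t, mul_zero]
      exact zero_le
    · have : (⊤ : ℝ≥0∞) ^ t = ⊤ := ENNReal.top_rpow_of_pos ht0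
      rw [this]
      have : ENNReal.ofReal t * ⊤ = ⊤ := by
        rw [ENNReal.mul_top]
        simp [ENNReal.ofReal_eq_zero, not_le, ht0]
      rw [this, top_add]
      exact le_top
  rcases eq_or_ne b ⊤ with rfl | hb
  · rcases eq_or_ne a 0 with rfl | ha0
    · rw [ENNReal.zero_rpow_of_pos ht0, zero_mul]
      exact zero_le
    · have h2 : (⊤ : ℝ≥0∞) ^ (1-t) = ⊤ := ENNReal.top_rpow_of_pos h1t
      rw [h2]
      have : ENNReal.ofReal (1-t) * ⊤ = ⊤ := by
        rw [ENNReal.mul_top]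
        simp [ENNReal.ofReal_eq_zero, not_le, h1t, ht1]
      rw [this, add_top]
      exact le_top
  -- both finite
  lift a to ℝ≥0 using ha
  lift b to ℝ≥0 using hb
  have hw : t.toNNReal + (1-t).toNNReal = 1 := by
    ext
    simp only [NNReal.coe_add, Real.coe_toNNReal _ ht0.le, Real.coe_toNNReal _ h1t.le,
      NNReal.coe_one]
    linarith
  have := NNReal.geom_mean_le_arith_mean2_weighted t.toNNReal (1-t).toNNReal a b hw
  have hc : ((t.toNNReal : ℝ)) = t := Real.coe_toNNReal _ ht0.le
  have hc' : (((1-t).toNNReal : ℝ)) = 1 - t := Real.coe_toNNReal _ h1t.le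
  rw [hc, hc'] at this
  calc (a:ℝ≥0∞) ^ t * (b:ℝ≥0∞) ^ (1-t)
      = ((a ^ t * b ^ (1-t) : ℝ≥0) : ℝ≥0∞) := by
        rw [ENNReal.coe_mul, ENNReal.coe_rpow_of_nonneg _ ht0.le,
          ENNReal.coe_rpow_of_nonneg _ h1t.le]
    _ ≤ ((t.toNNReal * a + (1-t).toNNReal * b : ℝ≥0) : ℝ≥0∞) := ENNReal.coe_le_coe.mpr this
    _ = ENNReal.ofReal t * a + ENNReal.ofReal (1-t) * b := by
        rw [ENNReal.coe_add, ENNReal.coe_mul, ENNReal.coe_mul, ENNReal.ofReal, ENNReal.ofReal]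

lemma lintegral_Ioi_eq_Ioo (ψ : ℝ → ℝ≥0∞) (hψ0 : ∀ s, 1 ≤ s → ψ s = 0) :
    ∫⁻ s in Ioi (0:ℝ), ψ s = ∫⁻ s in Ioo (0:ℝ) 1, ψ s := by
  have hU : Ioi (0:ℝ) = Ioo 0 1 ∪ Ici 1 := by
    ext s
    simp only [Set.mem_Ioi, Set.mem_union, Set.mem_Ioo, Set.mem_Ici]
    constructor
    · intro h
      rcases lt_or_ge s 1 with h1 | h1
      · exact Or.inl ⟨h, h1⟩
      · exact Or.inr h1
    · rintro (⟨h, _⟩ | h) <;> linarith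
  have hdisj : Disjoint (Ioo (0:ℝ) 1) (Ici 1) := by
    rw [Set.disjoint_left]
    rintro s ⟨_, h1⟩ h2
    exact absurd h2 (not_le.2 h1)
  rw [hU, lintegral_union measurableSet_Ici hdisj]
  have : ∫⁻ s in Ici (1:ℝ), ψ s = 0 := by
    have : ∫⁻ s in Ici (1:ℝ), ψ s = ∫⁻ _ in Ici (1:ℝ), (0:ℝ≥0∞) :=
      setLIntegral_congr_fun measurableSet_Ici (fun s hs => hψ0 s hs)
    simpa using this
  rw [this, add_zero]

lemma pl_dim1_bounded {t : ℝ} (ht0 : 0 < t) (ht1 : t < 1)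
    (F G H : ℝ → ℝ≥0∞) (hF : Measurable F) (hG : Measurable G) (hH : Measurable H)
    (hMF : (⨆ x, F x) ≠ ⊤) (hMG : (⨆ x, G x) ≠ ⊤)
    (hyp : ∀ x y : ℝ, F x ^ t * G y ^ (1 - t) ≤ H (t * x + (1 - t) * y)) :
    (∫⁻ x, F x) ^ t * (∫⁻ x, G x) ^ (1 - t) ≤ ∫⁻ x, H x := by
  have h1t : 0 < 1 - t := by linarith
  set MF := ⨆ x, F x with hMFdef
  set MG := ⨆ x, G x with hMGdef
  rcases eq_or_ne MF 0 with hMF0 | hMF0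
  · have : ∀ x, F x = 0 := fun x => le_antisymm (hMF0 ▸ le_iSup F x) zero_le
    have : ∫⁻ x, F x = 0 := by simp [this]
    rw [this, ENNReal.zero_rpow_of_pos ht0, zero_mul]
    exact zero_le
  rcases eq_or_ne MG 0 with hMG0 | hMG0
  · have : ∀ x, G x = 0 := fun x => le_antisymm (hMG0 ▸ le_iSup G x) zero_le
    have : ∫⁻ x, G x = 0 := by simp [this]
    rw [this, ENNReal.zero_rpow_of_pos h1t, mul_zero]
    exact zero_le
  set mf := MF.toReal with hmfdef
  set mg := MG.toReal with hmgdef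
  have hmf : 0 < mf := ENNReal.toReal_pos hMF0 hMF
  have hmg : 0 < mg := ENNReal.toReal_pos hMG0 hMG
  have hMFr : ENNReal.ofReal mf = MF := ENNReal.ofReal_toReal hMF
  have hMGr : ENNReal.ofReal mg = MG := ENNReal.ofReal_toReal hMG
  set kr := mf ^ t * mg ^ (1 - t) with hkrdef
  have hkr : 0 < kr := by positivity
  have hKof : ENNReal.ofReal kr = MF ^ t * MG ^ (1-t) := by
    rw [hkrdef, ENNReal.ofReal_mul (by positivity), ← ENNReal.ofReal_rpow_of_nonneg hmf.le ht0.le,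
      ← ENNReal.ofReal_rpow_of_nonneg hmg.le h1t.le, hMFr, hMGr]
  set A : ℝ → Set ℝ := fun s => {x | ENNReal.ofReal (mf * s) < F x} with hAdef
  set B : ℝ → Set ℝ := fun s => {x | ENNReal.ofReal (mg * s) < G x} with hBdef
  have hAanti : Antitone fun s => volume (A s) := by
    intro s₁ s₂ h
    refine measure_mono fun x hx => ?_
    exact lt_of_le_of_lt (ENNReal.ofReal_le_ofReal (by nlinarith)) hx
  have hBanti : Antitone fun s => volume (B s) := by
    intro s₁ s₂ h
    refine measure_mono fun x hx => ?_
    exact lt_of_le_of_lt (ENNReal.ofReal_le_ofReal (by nlinarith)) hx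
  have hAmeas : Measurable fun s => volume (A s) := hAanti.measurable
  have hBmeas : Measurable fun s => volume (B s) := hBanti.measurable
  set IA := ∫⁻ s in Ioo (0:ℝ) 1, volume (A s) with hIAdef
  set IB := ∫⁻ s in Ioo (0:ℝ) 1, volume (B s) with hIBdef
  -- (1) ∫ F = MF * IA
  have hFint : ∫⁻ x, F x = MF * IA := by
    rw [lintegral_eq_layercake F hF,
      lintegral_Ioi_comp_mul_left hmf (fun u => volume {x | ENNReal.ofReal u < F x})
        ((Antitone.measurable (fun s₁ s₂ h => measure_mono fun x hx =>
          lt_of_le_of_lt (ENNReal.ofReal_le_ofReal h) hx)))]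
    have := lintegral_Ioi_eq_Ioo (fun s => volume (A s)) (fun s hs => ?_)
    · rw [this, hMFr]
    · have hempty : A s = ∅ := by
        ext x
        simp only [hAdef, Set.mem_setOf_eq, Set.mem_empty_iff_false, iff_false, not_lt]
        calc F x ≤ MF := le_iSup F x
          _ = ENNReal.ofReal mf := hMFr.symm
          _ ≤ ENNReal.ofReal (mf * s) := ENNReal.ofReal_le_ofReal (by nlinarith)
      show volume (A s) = 0
      rw [hempty]; simp
  have hGint : ∫⁻ x, G x = MG * IB := by
    rw [lintegral_eq_layercake G hG,
      lintegral_Ioi_comp_mul_left hmg (fun u => volume {x | ENNReal.ofReal u < G x})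
        ((Antitone.measurable (fun s₁ s₂ h => measure_mono fun x hx =>
          lt_of_le_of_lt (ENNReal.ofReal_le_ofReal h) hx)))]
    have := lintegral_Ioi_eq_Ioo (fun s => volume (B s)) (fun s hs => ?_)
    · rw [this, hMGr]
    · have hempty : B s = ∅ := by
        ext x
        simp only [hBdef, Set.mem_setOf_eq, Set.mem_empty_iff_false, iff_false, not_lt]
        calc G x ≤ MG := le_iSup G x
          _ = ENNReal.ofReal mg := hMGr.symm
          _ ≤ ENNReal.ofReal (mg * s) := ENNReal.ofReal_le_ofReal (by nlinarith)
      show volume (B s) = 0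
      rw [hempty]; simp
  -- (3) key superlevel bound
  have hkey : ∀ s ∈ Ioo (0:ℝ) 1,
      ENNReal.ofReal t * volume (A s) + ENNReal.ofReal (1-t) * volume (B s)
        ≤ volume {x | ENNReal.ofReal (kr * s) < H x} := by
    rintro s ⟨hs0, hs1⟩
    have hAne : (A s).Nonempty := by
      have : ENNReal.ofReal (mf * s) < MF := by
        rw [← hMFr]
        exact ENNReal.ofReal_lt_ofReal_iff hmf |>.mpr (by nlinarith)
      obtain ⟨x, hx⟩ := lt_iSup_iff.mp this
      exact ⟨x, hx⟩
    have hBne : (B s).Nonempty := by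
      have : ENNReal.ofReal (mg * s) < MG := by
        rw [← hMGr]
        exact ENNReal.ofReal_lt_ofReal_iff hmg |>.mpr (by nlinarith)
      obtain ⟨x, hx⟩ := lt_iSup_iff.mp this
      exact ⟨x, hx⟩
    have hsub : t • (A s) + (1-t) • (B s) ⊆ {x | ENNReal.ofReal (kr * s) < H x} := by
      rintro p ⟨u, ⟨x, hx, rfl⟩, v, ⟨y, hy, rfl⟩, rfl⟩
      simp only [Set.mem_setOf_eq]
      have hlt1 : ENNReal.ofReal (mf * s) ^ t < F x ^ t := ENNReal.rpow_lt_rpow hx ht0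
      have hlt2 : ENNReal.ofReal (mg * s) ^ (1-t) < G y ^ (1-t) :=
        ENNReal.rpow_lt_rpow hy h1t
      have hprod : ENNReal.ofReal (mf * s) ^ t * ENNReal.ofReal (mg * s) ^ (1-t)
          = ENNReal.ofReal (kr * s) := by
        rw [ENNReal.ofReal_rpow_of_nonneg (by positivity) ht0.le,
          ENNReal.ofReal_rpow_of_nonneg (by positivity) h1t.le,
          ← ENNReal.ofReal_mul (by positivity)]
        congr 1
        rw [Real.mul_rpow hmf.le hs0.le, Real.mul_rpow hmg.le hs0.le]
        rw [show mf ^ t * s ^ t * (mg ^ (1-t) * s ^ (1-t))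
            = (mf ^ t * mg ^ (1-t)) * (s ^ t * s ^ (1-t)) by ring]
        rw [← Real.rpow_add hs0, show t + (1-t) = 1 by ring, Real.rpow_one]
      calc ENNReal.ofReal (kr * s)
          = ENNReal.ofReal (mf * s) ^ t * ENNReal.ofReal (mg * s) ^ (1-t) := hprod.symm
        _ < F x ^ t * G y ^ (1-t) := ENNReal.mul_lt_mul hlt1 hlt2
        _ ≤ H (t * x + (1-t) * y) := hyp x y
        _ = H (t • x + (1-t) • y) := by norm_num
    have hrank : Module.finrank ℝ ℝ = 1 := Module.finrank_self ℝ
    calc ENNReal.ofReal t * volume (A s) + ENNReal.ofReal (1-t) * volume (B s)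
        = volume (t • A s) + volume ((1-t) • B s) := by
          rw [Measure.addHaar_smul, Measure.addHaar_smul, hrank, pow_one, pow_one,
            abs_of_pos ht0, abs_of_pos h1t]
      _ ≤ volume (t • A s + (1-t) • B s) :=
          volume_add_le_volume_sumset _ _ (hAne.smul_set) (hBne.smul_set)
      _ ≤ volume {x | ENNReal.ofReal (kr * s) < H x} := measure_mono hsub
  -- (4) lower bound on ∫ H
  have hHanti : Antitone fun s => volume {x | ENNReal.ofReal (kr * s) < H x} := by
    intro s₁ s₂ h
    refine measure_mono fun x hx => ?_
    exact lt_of_le_of_lt (ENNReal.ofReal_le_ofReal (by nlinarith)) hx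
  have hHint : ENNReal.ofReal kr * (ENNReal.ofReal t * IA + ENNReal.ofReal (1-t) * IB)
      ≤ ∫⁻ x, H x := by
    rw [lintegral_eq_layercake H hH,
      lintegral_Ioi_comp_mul_left hkr (fun u => volume {x | ENNReal.ofReal u < H x})
        ((Antitone.measurable (fun s₁ s₂ h => measure_mono fun x hx =>
          lt_of_le_of_lt (ENNReal.ofReal_le_ofReal h) hx)))]
    refine mul_le_mul_right ?_ _
    calc ENNReal.ofReal t * IA + ENNReal.ofReal (1-t) * IB
        = ∫⁻ s in Ioo (0:ℝ) 1,
            (ENNReal.ofReal t * volume (A s) + ENNReal.ofReal (1-t) * volume (B s)) := by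
          rw [lintegral_add_left (by fun_prop), lintegral_const_mul _ hAmeas,
            lintegral_const_mul _ hBmeas]
      _ ≤ ∫⁻ s in Ioo (0:ℝ) 1, volume {x | ENNReal.ofReal (kr * s) < H x} :=
          setLIntegral_mono hHanti.measurable hkey
      _ ≤ ∫⁻ s in Ioi (0:ℝ), volume {x | ENNReal.ofReal (kr * s) < H x} :=
          lintegral_mono_set Set.Ioo_subset_Ioi_self
  -- conclude
  rw [hFint, hGint]
  calc (MF * IA) ^ t * (MG * IB) ^ (1-t)
      = (MF ^ t * MG ^ (1-t)) * (IA ^ t * IB ^ (1-t)) := by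
        rw [ENNReal.mul_rpow_of_nonneg _ _ ht0.le, ENNReal.mul_rpow_of_nonneg _ _ h1t.le]
        ring
    _ = ENNReal.ofReal kr * (IA ^ t * IB ^ (1-t)) := by rw [hKof]
    _ ≤ ENNReal.ofReal kr * (ENNReal.ofReal t * IA + ENNReal.ofReal (1-t) * IB) :=
        mul_le_mul_right (ennreal_geom_mean_le ht0 ht1 IA IB) _
    _ ≤ ∫⁻ x, H x := hHint

/-- 1-dimensional Prékopa–Leindler, measurable ENNReal form. -/
lemma pl_dim1 {t : ℝ} (ht0 : 0 < t) (ht1 : t < 1)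
    (F G H : ℝ → ℝ≥0∞) (hF : Measurable F) (hG : Measurable G) (hH : Measurable H)
    (hyp : ∀ x y : ℝ, F x ^ t * G y ^ (1 - t) ≤ H (t * x + (1 - t) * y)) :
    (∫⁻ x, F x) ^ t * (∫⁻ x, G x) ^ (1 - t) ≤ ∫⁻ x, H x := by
  have h1t : 0 < 1 - t := by linarith
  set Fn : ℕ → ℝ → ℝ≥0∞ := fun n x => min (F x) n with hFn
  set Gn : ℕ → ℝ → ℝ≥0∞ := fun n x => min (G x) n with hGn
  have hFnm : ∀ n, Measurable (Fn n) := fun n => hF.min measurable_const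
  have hGnm : ∀ n, Measurable (Gn n) := fun n => hG.min measurable_const
  have hmono : ∀ (φ : ℝ → ℝ≥0∞), Monotone (fun (n : ℕ) (x : ℝ) => min (φ x) n) :=
    fun φ n m h x => min_le_min le_rfl (by exact_mod_cast Nat.cast_le.mpr h)
  have hsup : ∀ (φ : ℝ → ℝ≥0∞) (x : ℝ), (⨆ n : ℕ, min (φ x) (n:ℝ≥0∞)) = φ x := by
    intro φ x
    rw [← inf_iSup_eq]
    simp [ENNReal.iSup_natCast]
  have hFsup : ∫⁻ x, F x = ⨆ n, ∫⁻ x, Fn n x := by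
    conv_lhs => rw [show F = fun x => ⨆ n : ℕ, Fn n x from funext fun x => (hsup F x).symm]
    exact lintegral_iSup hFnm (fun n m h x => hmono F h x)
  have hGsup : ∫⁻ x, G x = ⨆ n, ∫⁻ x, Gn n x := by
    conv_lhs => rw [show G = fun x => ⨆ n : ℕ, Gn n x from funext fun x => (hsup G x).symm]
    exact lintegral_iSup hGnm (fun n m h x => hmono G h x)
  have hn : ∀ n : ℕ, (∫⁻ x, Fn n x) ^ t * (∫⁻ x, Gn n x) ^ (1-t) ≤ ∫⁻ x, H x := by
    intro n
    refine pl_dim1_bounded ht0 ht1 (Fn n) (Gn n) H (hFnm n) (hGnm n) hH ?_ ?_ ?_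
    · exact ne_top_of_le_ne_top (by simp) (iSup_le fun x => min_le_right _ _)
    · exact ne_top_of_le_ne_top (by simp) (iSup_le fun x => min_le_right _ _)
    · intro x y
      refine le_trans ?_ (hyp x y)
      exact mul_le_mul' (ENNReal.rpow_le_rpow (min_le_left _ _) ht0.le)
        (ENNReal.rpow_le_rpow (min_le_left _ _) h1t.le)
  rw [hFsup, hGsup]
  have hrw : ∀ (c : ℝ) (hc : 0 < c) (u : ℕ → ℝ≥0∞), Monotone u →
      (⨆ n, u n) ^ c = ⨆ n, (u n) ^ c := by
    intro c hc u hu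
    refine Monotone.map_iSup_of_continuousAt ?_ (fun a b h => ENNReal.rpow_le_rpow h hc.le) ?_
    · exact ENNReal.continuous_rpow_const.continuousAt
    · simp [ENNReal.zero_rpow_of_pos hc]
  have hFmono : Monotone fun n => ∫⁻ x, Fn n x :=
    fun n m h => lintegral_mono fun x => hmono F h x
  have hGmono : Monotone fun n => ∫⁻ x, Gn n x :=
    fun n m h => lintegral_mono fun x => hmono G h x
  rw [hrw t ht0 _ hFmono, hrw (1-t) h1t _ hGmono, ENNReal.iSup_mul]
  refine iSup_le fun n => ?_
  rw [ENNReal.mul_iSup]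
  refine iSup_le fun m => ?_
  calc (∫⁻ x, Fn n x) ^ t * (∫⁻ x, Gn m x) ^ (1-t)
      ≤ (∫⁻ x, Fn (max n m) x) ^ t * (∫⁻ x, Gn (max n m) x) ^ (1-t) :=
        mul_le_mul' (ENNReal.rpow_le_rpow (hFmono (le_max_left n m)) ht0.le)
          (ENNReal.rpow_le_rpow (hGmono (le_max_right n m)) h1t.le)
    _ ≤ ∫⁻ x, H x := hn (max n m)

/-- Prékopa–Leindler on `Fin n → ℝ`, measurable ENNReal form. -/
lemma pl_pi : ∀ (n : ℕ) {t : ℝ}, 0 < t → t < 1 →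
    ∀ (F G H : (Fin n → ℝ) → ℝ≥0∞), Measurable F → Measurable G → Measurable H →
    (∀ x y, F x ^ t * G y ^ (1 - t) ≤ H (t • x + (1 - t) • y)) →
    (∫⁻ x, F x) ^ t * (∫⁻ x, G x) ^ (1 - t) ≤ ∫⁻ x, H x := by
  intro n
  induction n with
  | zero =>
    intro t ht0 ht1 F G H hF hG hH hyp
    have h1t : 0 < 1 - t := by linarith
    have hvol : (volume : Measure (Fin 0 → ℝ)) Set.univ = 1 := by
      rw [MeasureTheory.volume_pi, Measure.pi_univ]
      simp
    set y0 : Fin 0 → ℝ := fun i => i.elim0 with hy0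
    have hFc : F = fun _ => F y0 := funext fun x => congrArg F (Subsingleton.elim x y0)
    have hGc : G = fun _ => G y0 := funext fun x => congrArg G (Subsingleton.elim x y0)
    have hHc : H = fun _ => H y0 := funext fun x => congrArg H (Subsingleton.elim x y0)
    rw [hFc, hGc, hHc, lintegral_const, lintegral_const, lintegral_const, hvol,
      mul_one, mul_one, mul_one]
    have := hyp y0 y0
    rwa [congrArg H (Subsingleton.elim (t • y0 + (1 - t) • y0) y0)] at this
  | succ n ih =>
    intro t ht0 ht1 F G H hF hG hH hyp
    have h1t : 0 < 1 - t := by linarith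
    set e := MeasurableEquiv.piFinSuccAbove (fun _ : Fin (n+1) => ℝ) 0 with he
    have hmp : MeasurePreserving (⇑e) volume volume :=
      volume_preserving_piFinSuccAbove (fun _ : Fin (n+1) => ℝ) 0
    have hmpsymm : MeasurePreserving (⇑e.symm) volume volume :=
      (volume_preserving_piFinSuccAbove (fun _ : Fin (n+1) => ℝ) 0).symm e
    set F' : ℝ × (Fin n → ℝ) → ℝ≥0∞ := F ∘ ⇑e.symm with hF'
    set G' : ℝ × (Fin n → ℝ) → ℝ≥0∞ := G ∘ ⇑e.symm with hG'
    set H' : ℝ × (Fin n → ℝ) → ℝ≥0∞ := H ∘ ⇑e.symm with hH'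
    have hF'm : Measurable F' := hF.comp e.symm.measurable
    have hG'm : Measurable G' := hG.comp e.symm.measurable
    have hH'm : Measurable H' := hH.comp e.symm.measurable
    have hlin : ∀ (a₁ a₂ : ℝ) (p₁ p₂ : Fin n → ℝ),
        e.symm (t * a₁ + (1-t) * a₂, t • p₁ + (1-t) • p₂)
          = t • e.symm (a₁, p₁) + (1-t) • e.symm (a₂, p₂) := by
      intro a₁ a₂ p₁ p₂
      show Fin.insertNth (α := fun _ : Fin (n+1) => ℝ) 0 (t * a₁ + (1-t) * a₂)
          (t • p₁ + (1-t) • p₂)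
        = t • Fin.insertNth (α := fun _ : Fin (n+1) => ℝ) 0 a₁ p₁
          + (1-t) • Fin.insertNth (α := fun _ : Fin (n+1) => ℝ) 0 a₂ p₂
      funext j
      refine Fin.cases ?_ (fun k => ?_) j
      · simp
      · have h0 : (0 : Fin (n+1)).succAbove k = k.succ := by simp [Fin.succAbove_zero]
        simp only [Pi.add_apply, Pi.smul_apply, smul_eq_mul]
        rw [← h0, Fin.insertNth_apply_succAbove, Fin.insertNth_apply_succAbove,
          Fin.insertNth_apply_succAbove]
        simp
    -- marginals
    set φF : ℝ → ℝ≥0∞ := fun a => ∫⁻ p, F' (a, p) with hφF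
    set φG : ℝ → ℝ≥0∞ := fun a => ∫⁻ p, G' (a, p) with hφG
    set φH : ℝ → ℝ≥0∞ := fun a => ∫⁻ p, H' (a, p) with hφH
    have hφFm : Measurable φF := Measurable.lintegral_prod_right (f := fun a p => F' (a, p)) hF'm
    have hφGm : Measurable φG := Measurable.lintegral_prod_right (f := fun a p => G' (a, p)) hG'm
    have hφHm : Measurable φH := Measurable.lintegral_prod_right (f := fun a p => H' (a, p)) hH'm
    have hyp1 : ∀ a b : ℝ, φF a ^ t * φG b ^ (1 - t) ≤ φH (t * a + (1 - t) * b) := by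
      intro a b
      refine ih ht0 ht1 (fun p => F' (a, p)) (fun p => G' (b, p))
        (fun p => H' (t * a + (1-t) * b, p))
        (hF'm.comp (measurable_prodMk_left)) (hG'm.comp (measurable_prodMk_left))
        (hH'm.comp (measurable_prodMk_left)) ?_
      intro p q
      have := hyp (e.symm (a, p)) (e.symm (b, q))
      rwa [← hlin a b p q] at this
    have h1 := pl_dim1 ht0 ht1 φF φG φH hφFm hφGm hφHm hyp1
    have hFi : ∫⁻ x, F x = ∫⁻ a, φF a := by
      rw [← hmpsymm.lintegral_comp hF]
      exact lintegral_prod _ hF'm.aemeasurable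
    have hGi : ∫⁻ x, G x = ∫⁻ a, φG a := by
      rw [← hmpsymm.lintegral_comp hG]
      exact lintegral_prod _ hG'm.aemeasurable
    have hHi : ∫⁻ x, H x = ∫⁻ a, φH a := by
      rw [← hmpsymm.lintegral_comp hH]
      exact lintegral_prod _ hH'm.aemeasurable
    rw [hFi, hGi, hHi]
    exact h1

/-- Prékopa–Leindler on Euclidean space, measurable form. -/
lemma pl_euclidean_meas (m : ℕ) {t : ℝ} (ht0 : 0 < t) (ht1 : t < 1)
    (F G H : EuclideanSpace ℝ (Fin m) → ℝ≥0∞)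
    (hF : Measurable F) (hG : Measurable G) (hH : Measurable H)
    (hyp : ∀ x y, F x ^ t * G y ^ (1 - t) ≤ H (t • x + (1 - t) • y)) :
    (∫⁻ x, F x) ^ t * (∫⁻ x, G x) ^ (1 - t) ≤ ∫⁻ x, H x := by
  set ε := (MeasurableEquiv.toLp 2 (Fin m → ℝ)).symm with hε
  have hmp : MeasurePreserving (⇑ε.symm) volume volume :=
    (EuclideanSpace.volume_preserving_symm_measurableEquiv_toLp (Fin m)).symm ε
  have hlin : ∀ x y : Fin m → ℝ,
      ε.symm (t • x + (1 - t) • y) = t • ε.symm x + (1 - t) • ε.symm y := fun _ _ => rfl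
  have h1 := pl_pi m ht0 ht1 (F ∘ ⇑ε.symm) (G ∘ ⇑ε.symm) (H ∘ ⇑ε.symm)
    (hF.comp ε.symm.measurable) (hG.comp ε.symm.measurable) (hH.comp ε.symm.measurable)
    (fun x y => by simpa [Function.comp, hlin x y] using hyp (ε.symm x) (ε.symm y))
  simp only [Function.comp_apply] at h1
  rwa [hmp.lintegral_comp hF, hmp.lintegral_comp hG, hmp.lintegral_comp hH] at h1

/-- Prékopa–Leindler on Euclidean space, a.e.-measurable form. -/
lemma pl_euclidean (m : ℕ) {t : ℝ} (ht0 : 0 < t) (ht1 : t < 1)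
    (F G H : EuclideanSpace ℝ (Fin m) → ℝ≥0∞)
    (hF : AEMeasurable F) (hG : AEMeasurable G) (hH : AEMeasurable H)
    (hyp : ∀ x y, F x ^ t * G y ^ (1 - t) ≤ H (t • x + (1 - t) • y)) :
    (∫⁻ x, F x) ^ t * (∫⁻ x, G x) ^ (1 - t) ≤ ∫⁻ x, H x := by
  classical
  have h1t : 0 < 1 - t := by linarith
  obtain ⟨F', hF'm, hFae⟩ := hF
  obtain ⟨G', hG'm, hGae⟩ := hG
  obtain ⟨H', hH'm, hHae⟩ := hH
  set N0 : Set (EuclideanSpace ℝ (Fin m)) :=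
    {x | F x ≠ F' x} ∪ {x | G x ≠ G' x} ∪ {x | H x ≠ H' x} with hN0
  have hN0null : volume N0 = 0 := by
    refine measure_union_null (measure_union_null hFae hGae) hHae
  set N := toMeasurable volume N0 with hN
  have hNm : MeasurableSet N := measurableSet_toMeasurable _ _
  have hNnull : volume N = 0 := by rw [hN, measure_toMeasurable]; exact hN0null
  have hNsub : N0 ⊆ N := subset_toMeasurable _ _
  set F'' : EuclideanSpace ℝ (Fin m) → ℝ≥0∞ := fun x => if x ∈ N then 0 else F' x with hF''
  set G'' : EuclideanSpace ℝ (Fin m) → ℝ≥0∞ := fun x => if x ∈ N then 0 else G' x with hG''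
  set H'' : EuclideanSpace ℝ (Fin m) → ℝ≥0∞ := fun x => if x ∈ N then ⊤ else H' x with hH''
  have hF''m : Measurable F'' := Measurable.ite hNm measurable_const hF'm
  have hG''m : Measurable G'' := Measurable.ite hNm measurable_const hG'm
  have hH''m : Measurable H'' := Measurable.ite hNm measurable_const hH'm
  have hout : ∀ x ∉ N, F' x = F x ∧ G' x = G x ∧ H' x = H x := by
    intro x hx
    have : x ∉ N0 := fun h => hx (hNsub h)
    simp only [hN0, Set.mem_union, Set.mem_setOf_eq, not_or, not_not] at this
    exact ⟨this.1.1.symm, this.1.2.symm, this.2.symm⟩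
  have hF''le : ∀ x, F'' x ≤ F x := by
    intro x
    by_cases hx : x ∈ N
    · simp [hF'', hx]
    · simp [hF'', hx, (hout x hx).1]
  have hG''le : ∀ x, G'' x ≤ G x := by
    intro x
    by_cases hx : x ∈ N
    · simp [hG'', hx]
    · simp [hG'', hx, (hout x hx).2.1]
  have hH''ge : ∀ x, H x ≤ H'' x := by
    intro x
    by_cases hx : x ∈ N
    · simp [hH'', hx]
    · simp [hH'', hx, (hout x hx).2.2]
  have hae : ∀ᵐ x, x ∉ N := by
    rw [Filter.eventually_iff]
    exact (measure_eq_zero_iff_ae_notMem (μ := (volume : Measure (EuclideanSpace ℝ (Fin m))))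
      (s := N)).mp hNnull
  have hF''ae : F'' =ᵐ[volume] F := by
    filter_upwards [hae] with x hx
    simp [hF'', hx, (hout x hx).1]
  have hG''ae : G'' =ᵐ[volume] G := by
    filter_upwards [hae] with x hx
    simp [hG'', hx, (hout x hx).2.1]
  have hH''ae : H'' =ᵐ[volume] H := by
    filter_upwards [hae] with x hx
    simp [hH'', hx, (hout x hx).2.2]
  have h1 := pl_euclidean_meas m ht0 ht1 F'' G'' H'' hF''m hG''m hH''m ?_
  · rwa [lintegral_congr_ae hF''ae, lintegral_congr_ae hG''ae, lintegral_congr_ae hH''ae] at h1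
  · intro x y
    calc F'' x ^ t * G'' y ^ (1-t)
        ≤ F x ^ t * G y ^ (1-t) :=
          mul_le_mul' (ENNReal.rpow_le_rpow (hF''le x) ht0.le)
            (ENNReal.rpow_le_rpow (hG''le y) h1t.le)
      _ ≤ H (t • x + (1-t) • y) := hyp x y
      _ ≤ H'' (t • x + (1-t) • y) := hH''ge _

/-- Prékopa: If `f : ℝ^d × ℝ^m → ℝ≥0` is jointly log-concave in `(z,x)` and
integrable in `x` for each `z`, then the marginal `h z = ∫ f(z,x) dx` is log-concave in `z`. -/
theorem prekopa_marginal_log_concave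
    (d m : ℕ)
    (f : EuclideanSpace ℝ (Fin d) × EuclideanSpace ℝ (Fin m) → ℝ)
    (hf_nonneg : ∀ p, 0 ≤ f p)
    (hf_logconcave : ∀ (p q : EuclideanSpace ℝ (Fin d) × EuclideanSpace ℝ (Fin m)),
      ∀ l : ℝ, 0 ≤ l → l ≤ 1 →
        f p ^ l * f q ^ (1 - l) ≤ f (l • p + (1 - l) • q))
    (hf_int : ∀ z, Integrable (fun x => f (z, x)))
    (h : EuclideanSpace ℝ (Fin d) → ℝ)
    (hh : ∀ z, h z = ∫ x, f (z, x)) :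
    ∀ (z₁ z₂ : EuclideanSpace ℝ (Fin d)), ∀ l : ℝ, 0 ≤ l → l ≤ 1 →
      h z₁ ^ l * h z₂ ^ (1 - l) ≤ h (l • z₁ + (1 - l) • z₂) := by
  intro z₁ z₂ l hl0 hl1
  have hnn : ∀ z, 0 ≤ h z := by
    intro z
    rw [hh z]
    exact integral_nonneg fun x => hf_nonneg _
  rcases eq_or_lt_of_le hl0 with rfl | hl0'
  · simp only [Real.rpow_zero, one_mul, sub_zero, Real.rpow_one, zero_smul, zero_add, one_smul]
    exact le_rfl
  rcases eq_or_lt_of_le hl1 with rfl | hl1'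
  · simp only [Real.rpow_one, sub_self, Real.rpow_zero, mul_one, one_smul, zero_smul, add_zero]
    exact le_rfl
  set z' := l • z₁ + (1 - l) • z₂ with hz'
  set F : EuclideanSpace ℝ (Fin m) → ℝ≥0∞ := fun x => ENNReal.ofReal (f (z₁, x)) with hF
  set G : EuclideanSpace ℝ (Fin m) → ℝ≥0∞ := fun x => ENNReal.ofReal (f (z₂, x)) with hG
  set H : EuclideanSpace ℝ (Fin m) → ℝ≥0∞ := fun x => ENNReal.ofReal (f (z', x)) with hH
  have h1l : 0 < 1 - l := by linarith
  have hFa : AEMeasurable F := (hf_int z₁).aemeasurable.ennreal_ofReal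
  have hGa : AEMeasurable G := (hf_int z₂).aemeasurable.ennreal_ofReal
  have hHa : AEMeasurable H := (hf_int z').aemeasurable.ennreal_ofReal
  have hyp : ∀ x y, F x ^ l * G y ^ (1 - l) ≤ H (l • x + (1 - l) • y) := by
    intro x y
    have hkey := hf_logconcave (z₁, x) (z₂, y) l hl0 hl1
    have harg : l • ((z₁, x) : EuclideanSpace ℝ (Fin d) × EuclideanSpace ℝ (Fin m))
        + (1 - l) • (z₂, y) = (z', l • x + (1 - l) • y) := by
      simp [Prod.ext_iff, hz', Prod.smul_mk]
    rw [harg] at hkey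
    calc F x ^ l * G y ^ (1 - l)
        = ENNReal.ofReal (f (z₁, x) ^ l * f (z₂, y) ^ (1 - l)) := by
          rw [hF, hG, ENNReal.ofReal_rpow_of_nonneg (hf_nonneg _) hl0,
            ENNReal.ofReal_rpow_of_nonneg (hf_nonneg _) h1l.le,
            ← ENNReal.ofReal_mul (Real.rpow_nonneg (hf_nonneg _) _)]
      _ ≤ ENNReal.ofReal (f (z', l • x + (1 - l) • y)) := ENNReal.ofReal_le_ofReal hkey
      _ = H (l • x + (1 - l) • y) := rfl
  have hmain := pl_euclidean m hl0' hl1' F G H hFa hGa hHa hyp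
  have hint : ∀ z, ∫⁻ x, ENNReal.ofReal (f (z, x)) = ENNReal.ofReal (h z) := by
    intro z
    rw [hh z]
    exact (ofReal_integral_eq_lintegral_ofReal (hf_int z)
      (Filter.Eventually.of_forall fun x => hf_nonneg _)).symm
  rw [hF, hG, hH] at hmain
  rw [hint z₁, hint z₂, hint z'] at hmain
  have hfin : ENNReal.ofReal (h z') ≠ ⊤ := ENNReal.ofReal_ne_top
  have := ENNReal.toReal_mono hfin hmain
  rw [ENNReal.toReal_mul, ← ENNReal.toReal_rpow, ← ENNReal.toReal_rpow,
    ENNReal.toReal_ofReal (hnn z₁), ENNReal.toReal_ofReal (hnn z₂),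
    ENNReal.toReal_ofReal (hnn z')] at this
  exact this
end

section
/- If p(x) > 0 and q(z | x) > 0 (as a function of (z,x)) are each log-concave, then the product (z,x) ↦ q(z|x)·p(x) is jointly log-concave, and consequently the induced marginal z ↦ ∫ q(z|x)p(x)dx is log-concave. -/
open MeasureTheory Set Pointwise ENNReal NNReal Filter Topology

lemma bm1_compact {K L : Set ℝ} (hK : IsCompact K) (hL : IsCompact L)
    (hKne : K.Nonempty) (hLne : L.Nonempty) :
    volume K + volume L ≤ volume (K + L) := by
  set a := sSup K with ha
  set b := sInf L with hb
  have haK : a ∈ K := hK.sSup_mem hKne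
  have hbL : b ∈ L := hL.sInf_mem hLne
  have hsub : (b +ᵥ K) ∪ (a +ᵥ L) ⊆ K + L := by
    rintro x (⟨k, hk, rfl⟩ | ⟨l, hl, rfl⟩)
    · exact ⟨k, hk, b, hbL, by simp [add_comm]⟩
    · exact ⟨a, haK, l, hl, rfl⟩
  have hinter : (b +ᵥ K) ∩ (a +ᵥ L) ⊆ {a + b} := by
    rintro x ⟨⟨k, hk, rfl⟩, ⟨l, hl, hx⟩⟩
    have h1 : b + k ≤ b + a := add_le_add_right (le_csSup hK.bddAbove hk) b
    have h2 : a + b ≤ a + l := add_le_add_right (csInf_le hL.bddBelow hl) a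
    simp only [vadd_eq_add] at hx ⊢
    simp only [mem_singleton_iff]
    linarith
  have hm1 : MeasurableSet (a +ᵥ L) := (hL.vadd a).measurableSet
  have key := measure_union_add_inter (μ := volume) (b +ᵥ K) hm1
  have h0 : volume ((b +ᵥ K) ∩ (a +ᵥ L)) = 0 :=
    le_antisymm (le_trans (measure_mono hinter) (by simp)) zero_le
  calc volume K + volume L = volume (b +ᵥ K) + volume (a +ᵥ L) := by
        rw [measure_vadd, measure_vadd]
    _ = volume ((b +ᵥ K) ∪ (a +ᵥ L)) + volume ((b +ᵥ K) ∩ (a +ᵥ L)) := key.symm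
    _ = volume ((b +ᵥ K) ∪ (a +ᵥ L)) := by rw [h0, add_zero]
    _ ≤ volume (K + L) := measure_mono hsub

lemma bm1_meas {A B C : Set ℝ} (hA : MeasurableSet A) (hB : MeasurableSet B)
    (hC : MeasurableSet C) (hAne : A.Nonempty) (hBne : B.Nonempty)
    (hsub : A + B ⊆ C) : volume A + volume B ≤ volume C := by
  obtain ⟨a₀, ha₀⟩ := hAne
  obtain ⟨b₀, hb₀⟩ := hBne
  by_cases hAinf : volume A = ∞
  · have h1 : b₀ +ᵥ A ⊆ C := by
      rintro x ⟨k, hk, rfl⟩; exact hsub ⟨k, hk, b₀, hb₀, by simp [add_comm]⟩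
    have := measure_mono (μ := volume) h1
    rw [measure_vadd, hAinf] at this
    simp [le_antisymm (le_top) this]
  by_cases hBinf : volume B = ∞
  · have h1 : a₀ +ᵥ B ⊆ C := by
      rintro x ⟨k, hk, rfl⟩; exact hsub ⟨a₀, ha₀, k, hk, rfl⟩
    have := measure_mono (μ := volume) h1
    rw [measure_vadd, hBinf] at this
    simp [le_antisymm (le_top) this]
  refine ENNReal.le_of_forall_pos_le_add fun ε hε hC' => ?_
  obtain ⟨K, hKA, hK, hKv⟩ := hA.exists_isCompact_lt_add hAinf
    (ε := (ε : ℝ≥0∞) / 2) (by simp [hε.ne'])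
  obtain ⟨L, hLB, hL, hLv⟩ := hB.exists_isCompact_lt_add hBinf
    (ε := (ε : ℝ≥0∞) / 2) (by simp [hε.ne'])
  have hK' : IsCompact (K ∪ {a₀}) := hK.union isCompact_singleton
  have hL' : IsCompact (L ∪ {b₀}) := hL.union isCompact_singleton
  have hKA' : K ∪ {a₀} ⊆ A := union_subset hKA (by simpa using ha₀)
  have hLB' : L ∪ {b₀} ⊆ B := union_subset hLB (by simpa using hb₀)
  have hsum : (K ∪ {a₀}) + (L ∪ {b₀}) ⊆ C := fun x hx => by
    obtain ⟨u, hu, v, hv, rfl⟩ := hx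
    exact hsub ⟨u, hKA' hu, v, hLB' hv, rfl⟩
  have hbm := bm1_compact hK' hL' ⟨a₀, by simp⟩ ⟨b₀, by simp⟩
  calc volume A + volume B ≤ (volume K + ε / 2) + (volume L + ε / 2) :=
        add_le_add hKv.le hLv.le
    _ = (volume K + volume L) + ε := by
        rw [add_add_add_comm, ENNReal.add_halves]
    _ ≤ (volume (K ∪ {a₀}) + volume (L ∪ {b₀})) + ε := by
        gcongr <;> exact subset_union_left
    _ ≤ volume ((K ∪ {a₀}) + (L ∪ {b₀})) + ε := by gcongr
    _ ≤ volume C + ε := add_le_add_left (measure_mono hsum) _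

lemma lc_le_one {u : ℝ → ℝ≥0∞} (hu : Measurable u) (hub : ∀ x, u x ≤ 1) :
    ∫⁻ x, u x = ∫⁻ s in Ioo (0:ℝ) 1, volume {x | ENNReal.ofReal s < u x} := by
  have hW : MeasurableSet {p : ℝ × ℝ | ENNReal.ofReal p.2 < u p.1} := by
    have : {p : ℝ × ℝ | ENNReal.ofReal p.2 < u p.1} =
        (fun p : ℝ × ℝ => (ENNReal.ofReal p.2, u p.1)) ⁻¹' {q : ℝ≥0∞ × ℝ≥0∞ | q.1 < q.2} := rfl
    rw [this]
    exact (measurableSet_lt measurable_fst measurable_snd).preimage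
      ((ENNReal.measurable_ofReal.comp measurable_snd).prodMk (hu.comp measurable_fst))
  have key : ∀ x, u x = ∫⁻ s in Ioo (0:ℝ) 1, {s : ℝ | ENNReal.ofReal s < u x}.indicator 1 s := by
    intro x
    have hne : u x ≠ ∞ := (lt_of_le_of_lt (hub x) (by norm_num)).ne
    have hmble : MeasurableSet {s : ℝ | ENNReal.ofReal s < u x} :=
      (measurableSet_lt (ENNReal.measurable_ofReal) measurable_const)
    rw [lintegral_indicator_one hmble, Measure.restrict_apply hmble]
    have hset : {s : ℝ | ENNReal.ofReal s < u x} ∩ Ioo 0 1 = Ioo 0 ((u x).toReal) := by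
      ext s
      simp only [mem_inter_iff, mem_setOf_eq, mem_Ioo]
      constructor
      · rintro ⟨h1, h2, h3⟩
        exact ⟨h2, (ENNReal.ofReal_lt_iff_lt_toReal h2.le hne).mp h1⟩
      · rintro ⟨h1, h2⟩
        have h3 : (u x).toReal ≤ 1 := by
          simpa using ENNReal.toReal_mono (by norm_num) (hub x)
        exact ⟨(ENNReal.ofReal_lt_iff_lt_toReal h1.le hne).mpr h2, h1, lt_of_lt_of_le h2 h3⟩
    rw [hset, Real.volume_Ioo, sub_zero, ENNReal.ofReal_toReal hne]
  calc ∫⁻ x, u x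
      = ∫⁻ x, ∫⁻ s in Ioo (0:ℝ) 1,
          {p : ℝ × ℝ | ENNReal.ofReal p.2 < u p.1}.indicator 1 (x, s) := by
        refine lintegral_congr fun x => ?_
        rw [key x]
        rfl
    _ = ∫⁻ s in Ioo (0:ℝ) 1, ∫⁻ x,
          {p : ℝ × ℝ | ENNReal.ofReal p.2 < u p.1}.indicator 1 (x, s) := by
        apply lintegral_lintegral_swap
        exact ((measurable_one.indicator hW).comp
          (measurable_fst.prodMk measurable_snd)).aemeasurable
    _ = ∫⁻ s in Ioo (0:ℝ) 1, volume {x | ENNReal.ofReal s < u x} := by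
        refine lintegral_congr fun s => ?_
        have hmble : MeasurableSet {x : ℝ | ENNReal.ofReal s < u x} :=
          (measurableSet_lt measurable_const hu)
        rw [← lintegral_indicator_one hmble]
        rfl

lemma ennreal_amgm {a b : ℝ≥0∞} {l : ℝ} (hl0 : 0 < l) (hl1 : l < 1) :
    a ^ l * b ^ (1 - l) ≤ ENNReal.ofReal l * a + ENNReal.ofReal (1 - l) * b := by
  have hl1' : (0:ℝ) < 1 - l := by linarith
  by_cases ha : a = ∞
  · by_cases hb : b = 0
    · simp [ha, hb, ENNReal.zero_rpow_of_pos hl1']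
    · have : ENNReal.ofReal l * a = ∞ := by
        rw [ha, ENNReal.mul_top]
        simp [ENNReal.ofReal_pos.mpr hl0, (ENNReal.ofReal_pos.mpr hl0).ne']
      simp [this]
  by_cases hb : b = ∞
  · by_cases ha0 : a = 0
    · simp [hb, ha0, ENNReal.zero_rpow_of_pos hl0]
    · have : ENNReal.ofReal (1 - l) * b = ∞ := by
        rw [hb, ENNReal.mul_top]
        simp [(ENNReal.ofReal_pos.mpr hl1').ne']
      simp [this]
  lift a to NNReal using ha
  lift b to NNReal using hb
  set w1 : ℝ≥0 := ⟨l, hl0.le⟩ with hw1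
  set w2 : ℝ≥0 := ⟨1 - l, hl1'.le⟩ with hw2
  have h := NNReal.geom_mean_le_arith_mean2_weighted (w₁ := w1)
    (w₂ := w2) (p₁ := a) (p₂ := b) (by apply NNReal.eq; change l + (1 - l) = 1; ring)
  have hcw1 : (w1 : ℝ) = l := rfl
  have hcw2 : (w2 : ℝ) = 1 - l := rfl
  calc (↑a : ℝ≥0∞) ^ l * (↑b) ^ (1 - l)
      = ↑(a ^ (w1:ℝ) * b ^ (w2:ℝ)) := by
        rw [hcw1, hcw2, ← ENNReal.coe_rpow_of_nonneg a hl0.le,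
          ← ENNReal.coe_rpow_of_nonneg b hl1'.le, ENNReal.coe_mul]
    _ ≤ ↑(w1 * a + w2 * b) := ENNReal.coe_le_coe.mpr h
    _ = ENNReal.ofReal l * ↑a + ENNReal.ofReal (1 - l) * ↑b := by
        rw [ENNReal.ofReal_eq_coe_nnreal hl0.le, ENNReal.ofReal_eq_coe_nnreal hl1'.le]
        push_cast
        rfl

lemma pl1_core {l : ℝ} (hl0 : 0 < l) (hl1 : l < 1) {f g h : ℝ → ℝ≥0∞}
    (hf : Measurable f) (hg : Measurable g) (hh : Measurable h)
    (hfs : (⨆ x, f x) = 1) (hgs : (⨆ x, g x) = 1)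
    (hyp : ∀ x y, f x ^ l * g y ^ (1 - l) ≤ h (l * x + (1 - l) * y)) :
    ENNReal.ofReal l * (∫⁻ x, f x) + ENNReal.ofReal (1 - l) * (∫⁻ x, g x) ≤ ∫⁻ x, h x := by
  have hl1' : (0:ℝ) < 1 - l := by linarith
  have fle : ∀ x, f x ≤ 1 := fun x => hfs ▸ le_iSup f x
  have gle : ∀ x, g x ≤ 1 := fun x => hgs ▸ le_iSup g x
  set h' : ℝ → ℝ≥0∞ := fun x => min (h x) 1 with hh'def
  have hh' : Measurable h' := hh.min measurable_const
  have h'le : ∀ x, h' x ≤ 1 := fun x => min_le_right _ _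
  have hmono : ∫⁻ x, h' x ≤ ∫⁻ x, h x := lintegral_mono fun x => min_le_left _ _
  -- key pointwise inequality on level sets
  have key : ∀ s ∈ Ioo (0:ℝ) 1,
      ENNReal.ofReal l * volume {x | ENNReal.ofReal s < f x}
        + ENNReal.ofReal (1 - l) * volume {x | ENNReal.ofReal s < g x}
        ≤ volume {x | ENNReal.ofReal s < h' x} := by
    rintro s ⟨hs0, hs1⟩
    have hsne : ENNReal.ofReal s ≠ 0 := (ENNReal.ofReal_pos.mpr hs0).ne'
    have hsnetop : ENNReal.ofReal s ≠ ∞ := ENNReal.ofReal_ne_top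
    have hslt1 : ENNReal.ofReal s < 1 := by
      rw [← ENNReal.ofReal_one]
      exact ENNReal.ofReal_lt_ofReal_iff_of_nonneg hs0.le |>.mpr hs1
    set A := {x : ℝ | ENNReal.ofReal s < f x} with hA
    set B := {x : ℝ | ENNReal.ofReal s < g x} with hB
    have hAm : MeasurableSet A := measurableSet_lt measurable_const hf
    have hBm : MeasurableSet B := measurableSet_lt measurable_const hg
    have hAne : A.Nonempty := by
      have : ENNReal.ofReal s < ⨆ x, f x := hfs ▸ hslt1
      obtain ⟨x, hx⟩ := lt_iSup_iff.mp this
      exact ⟨x, hx⟩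
    have hBne : B.Nonempty := by
      have : ENNReal.ofReal s < ⨆ x, g x := hgs ▸ hslt1
      obtain ⟨x, hx⟩ := lt_iSup_iff.mp this
      exact ⟨x, hx⟩
    have hCset : {x : ℝ | ENNReal.ofReal s < h' x} = {x : ℝ | ENNReal.ofReal s < h x} := by
      ext x
      simp only [hh'def, mem_setOf_eq, lt_min_iff, hslt1, and_true]
    have hCm : MeasurableSet {x : ℝ | ENNReal.ofReal s < h x} :=
      measurableSet_lt measurable_const hh
    have hsub : (l • A) + ((1 - l) • B) ⊆ {x : ℝ | ENNReal.ofReal s < h x} := by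
      rintro w ⟨u, ⟨x, hx, rfl⟩, v, ⟨y, hy, rfl⟩, rfl⟩
      simp only [smul_eq_mul, mem_setOf_eq]
      have step1 : ENNReal.ofReal s = (ENNReal.ofReal s) ^ l * (ENNReal.ofReal s) ^ (1 - l) := by
        rw [← ENNReal.rpow_add _ _ hsne hsnetop]
        norm_num
      calc ENNReal.ofReal s = (ENNReal.ofReal s) ^ l * (ENNReal.ofReal s) ^ (1 - l) := step1
        _ < f x ^ l * (ENNReal.ofReal s) ^ (1 - l) := by
            rw [ENNReal.mul_lt_mul_iff_left
              (ENNReal.rpow_pos (ENNReal.ofReal_pos.mpr hs0) hsnetop).ne'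
              (ENNReal.rpow_ne_top_of_nonneg hl1'.le hsnetop)]
            exact ENNReal.rpow_lt_rpow hx hl0
        _ ≤ f x ^ l * g y ^ (1 - l) :=
            mul_le_mul_right (ENNReal.rpow_le_rpow hy.le hl1'.le) _
        _ ≤ h (l * x + (1 - l) * y) := hyp x y
    have hbm := bm1_meas ((hAm.const_smul₀ l)) ((hBm.const_smul₀ (1 - l))) hCm
      (hAne.smul_set) (hBne.smul_set) hsub
    have hvolA : volume (l • A) = ENNReal.ofReal l * volume A := by
      rw [Measure.addHaar_smul]
      simp [abs_of_pos hl0]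
    have hvolB : volume ((1 - l) • B) = ENNReal.ofReal (1 - l) * volume B := by
      rw [Measure.addHaar_smul]
      simp [abs_of_pos hl1']
    rw [hCset, ← hvolA, ← hvolB]
    exact hbm
  -- measurability of level-volume functions
  have measA : Measurable fun s : ℝ => volume {x | ENNReal.ofReal s < f x} := by
    apply Antitone.measurable
    intro s t hst
    exact measure_mono fun x hx => lt_of_le_of_lt (ENNReal.ofReal_le_ofReal hst) hx
  have measB : Measurable fun s : ℝ => volume {x | ENNReal.ofReal s < g x} := by
    apply Antitone.measurable
    intro s t hst
    exact measure_mono fun x hx => lt_of_le_of_lt (ENNReal.ofReal_le_ofReal hst) hx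
  calc ENNReal.ofReal l * (∫⁻ x, f x) + ENNReal.ofReal (1 - l) * (∫⁻ x, g x)
      = ENNReal.ofReal l * (∫⁻ s in Ioo (0:ℝ) 1, volume {x | ENNReal.ofReal s < f x})
        + ENNReal.ofReal (1 - l) * (∫⁻ s in Ioo (0:ℝ) 1, volume {x | ENNReal.ofReal s < g x}) := by
        rw [lc_le_one hf fle, lc_le_one hg gle]
    _ = ∫⁻ s in Ioo (0:ℝ) 1, (ENNReal.ofReal l * volume {x | ENNReal.ofReal s < f x}
        + ENNReal.ofReal (1 - l) * volume {x | ENNReal.ofReal s < g x}) := by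
        rw [← lintegral_const_mul' _ _ ENNReal.ofReal_ne_top,
          ← lintegral_const_mul' _ _ ENNReal.ofReal_ne_top,
          ← lintegral_add_left (measA.const_mul _)]
    _ ≤ ∫⁻ s in Ioo (0:ℝ) 1, volume {x | ENNReal.ofReal s < h' x} := by
        refine lintegral_mono_ae ((ae_restrict_iff' measurableSet_Ioo).mpr (ae_of_all _ ?_))
        exact key
    _ = ∫⁻ x, h' x := (lc_le_one hh' h'le).symm
    _ ≤ ∫⁻ x, h x := hmono

lemma pl1_bounded {l : ℝ} (hl0 : 0 < l) (hl1 : l < 1) {f g h : ℝ → ℝ≥0∞}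
    (hf : Measurable f) (hg : Measurable g) (hh : Measurable h)
    (hfb : (⨆ x, f x) ≠ ∞) (hgb : (⨆ x, g x) ≠ ∞)
    (hyp : ∀ x y, f x ^ l * g y ^ (1 - l) ≤ h (l * x + (1 - l) * y)) :
    (∫⁻ x, f x) ^ l * (∫⁻ x, g x) ^ (1 - l) ≤ ∫⁻ x, h x := by
  have hl1' : (0:ℝ) < 1 - l := by linarith
  by_cases hf0 : (∫⁻ x, f x) = 0
  · rw [hf0, ENNReal.zero_rpow_of_pos hl0, zero_mul]; exact zero_le
  by_cases hg0 : (∫⁻ x, g x) = 0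
  · rw [hg0, ENNReal.zero_rpow_of_pos hl1', mul_zero]; exact zero_le
  set Mf := ⨆ x, f x with hMf
  set Mg := ⨆ x, g x with hMg
  have hMf0 : Mf ≠ 0 := by
    intro hc
    apply hf0
    have : ∀ x, f x = 0 := fun x => le_antisymm (hc ▸ le_iSup f x) zero_le
    simp [lintegral_congr this]
  have hMg0 : Mg ≠ 0 := by
    intro hc
    apply hg0
    have : ∀ x, g x = 0 := fun x => le_antisymm (hc ▸ le_iSup g x) zero_le
    simp [lintegral_congr this]
  set c := Mf ^ l * Mg ^ (1 - l) with hc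
  have hc0 : c ≠ 0 := by
    simp only [hc, mul_ne_zero_iff]
    constructor <;> [skip; skip] <;>
      first
        | exact fun hx => hMf0 (by simpa [ENNReal.rpow_eq_zero_iff, hl0, hl1', hl0.ne', hMf0, hfb] using hx)
        | exact fun hx => hMg0 (by simpa [ENNReal.rpow_eq_zero_iff, hl0, hl1', hl1'.ne', hMg0, hgb] using hx)
  have hctop : c ≠ ∞ := by
    apply ENNReal.mul_ne_top
    · exact ENNReal.rpow_ne_top_of_nonneg hl0.le hfb
    · exact ENNReal.rpow_ne_top_of_nonneg hl1'.le hgb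
  set f' : ℝ → ℝ≥0∞ := fun x => f x / Mf with hf'
  set g' : ℝ → ℝ≥0∞ := fun x => g x / Mg with hg'
  set h' : ℝ → ℝ≥0∞ := fun x => h x / c with hh'
  have hdivmul : ∀ (a b u v : ℝ≥0∞), u ≠ 0 → u ≠ ∞ → v ≠ 0 → v ≠ ∞ →
      (a / u) * (b / v) = (a * b) / (u * v) := by
    intro a b u v hu0 hut hv0 hvt
    rw [div_eq_mul_inv, div_eq_mul_inv, div_eq_mul_inv, ENNReal.mul_inv (Or.inl hu0) (Or.inl hut)]
    ring
  have hMfl0 : Mf ^ l ≠ 0 := fun hx => hMf0 (by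
    rcases (ENNReal.rpow_eq_zero_iff).mp hx with ⟨h1, _⟩ | ⟨h1, h2⟩
    · exact h1
    · exact absurd h2 (by linarith))
  have hMflt : Mf ^ l ≠ ∞ := ENNReal.rpow_ne_top_of_nonneg hl0.le hfb
  have hMgl0 : Mg ^ (1-l) ≠ 0 := fun hx => hMg0 (by
    rcases (ENNReal.rpow_eq_zero_iff).mp hx with ⟨h1, _⟩ | ⟨h1, h2⟩
    · exact h1
    · exact absurd h2 (by linarith))
  have hMglt : Mg ^ (1-l) ≠ ∞ := ENNReal.rpow_ne_top_of_nonneg hl1'.le hgb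
  have hyp' : ∀ x y, f' x ^ l * g' y ^ (1 - l) ≤ h' (l * x + (1 - l) * y) := by
    intro x y
    rw [hf', hg', hh']
    simp only
    rw [ENNReal.div_rpow_of_nonneg _ _ hl0.le, ENNReal.div_rpow_of_nonneg _ _ hl1'.le,
      hdivmul _ _ _ _ hMfl0 hMflt hMgl0 hMglt]
    exact ENNReal.div_le_div_right (hyp x y) c
  have hsupf' : (⨆ x, f' x) = 1 := by
    rw [hf']
    simp only [div_eq_mul_inv]
    rw [← ENNReal.iSup_mul]
    exact ENNReal.mul_inv_cancel hMf0 hfb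
  have hsupg' : (⨆ x, g' x) = 1 := by
    rw [hg']
    simp only [div_eq_mul_inv]
    rw [← ENNReal.iSup_mul]
    exact ENNReal.mul_inv_cancel hMg0 hgb
  have hcore := pl1_core hl0 hl1 (hf.div_const Mf) (hg.div_const Mg) (hh.div_const c)
    hsupf' hsupg' hyp'
  have hif : (∫⁻ x, f' x) = (∫⁻ x, f x) / Mf := by
    simp only [hf', div_eq_mul_inv]
    exact lintegral_mul_const' _ _ (by simp [hMf0])
  have hig : (∫⁻ x, g' x) = (∫⁻ x, g x) / Mg := by
    simp only [hg', div_eq_mul_inv]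
    exact lintegral_mul_const' _ _ (by simp [hMg0])
  have hih : (∫⁻ x, h' x) = (∫⁻ x, h x) / c := by
    simp only [hh', div_eq_mul_inv]
    exact lintegral_mul_const' _ _ (by simp [hc0])
  have key : ((∫⁻ x, f x) ^ l * (∫⁻ x, g x) ^ (1-l)) / c ≤ (∫⁻ x, h x) / c := by
    have h1 : ((∫⁻ x, f x) ^ l * (∫⁻ x, g x) ^ (1-l)) / c
        = (∫⁻ x, f' x) ^ l * (∫⁻ x, g' x) ^ (1 - l) := by
      rw [hif, hig, ENNReal.div_rpow_of_nonneg _ _ hl0.le, ENNReal.div_rpow_of_nonneg _ _ hl1'.le,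
        hdivmul _ _ _ _ hMfl0 hMflt hMgl0 hMglt]
    rw [h1, ← hih]
    exact le_trans (ennreal_amgm hl0 hl1) hcore
  calc (∫⁻ x, f x) ^ l * (∫⁻ x, g x) ^ (1-l)
      = ((∫⁻ x, f x) ^ l * (∫⁻ x, g x) ^ (1-l)) / c * c := by
        rw [ENNReal.div_mul_cancel hc0 hctop]
    _ ≤ (∫⁻ x, h x) / c * c := by exact mul_le_mul_left key c
    _ = ∫⁻ x, h x := ENNReal.div_mul_cancel hc0 hctop

lemma pl_dim1_s12 {l : ℝ} (hl0 : 0 < l) (hl1 : l < 1) {f g h : ℝ → ℝ≥0∞}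
    (hf : Measurable f) (hg : Measurable g) (hh : Measurable h)
    (hyp : ∀ x y, f x ^ l * g y ^ (1 - l) ≤ h (l * x + (1 - l) * y)) :
    (∫⁻ x, f x) ^ l * (∫⁻ x, g x) ^ (1 - l) ≤ ∫⁻ x, h x := by
  have hl1' : (0:ℝ) < 1 - l := by linarith
  by_cases hf0 : (∫⁻ x, f x) = 0
  · rw [hf0, ENNReal.zero_rpow_of_pos hl0, zero_mul]; exact zero_le
  by_cases hg0 : (∫⁻ x, g x) = 0
  · rw [hg0, ENNReal.zero_rpow_of_pos hl1', mul_zero]; exact zero_le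
  set fN : ℕ → ℝ → ℝ≥0∞ := fun N x => min (f x) N with hfN
  set gN : ℕ → ℝ → ℝ≥0∞ := fun N x => min (g x) N with hgN
  have hfNm : ∀ N, Measurable (fN N) := fun N => hf.min measurable_const
  have hgNm : ∀ N, Measurable (gN N) := fun N => hg.min measurable_const
  have hfNb : ∀ N, (⨆ x, fN N x) ≠ ∞ := fun N =>
    (lt_of_le_of_lt (iSup_le fun x => min_le_right _ _) (ENNReal.natCast_lt_top N)).ne
  have hgNb : ∀ N, (⨆ x, gN N x) ≠ ∞ := fun N =>
    (lt_of_le_of_lt (iSup_le fun x => min_le_right _ _) (ENNReal.natCast_lt_top N)).ne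
  have hhypN : ∀ N, ∀ x y, fN N x ^ l * gN N y ^ (1 - l) ≤ h (l * x + (1 - l) * y) := by
    intro N x y
    refine le_trans ?_ (hyp x y)
    exact mul_le_mul' (ENNReal.rpow_le_rpow (min_le_left _ _) hl0.le)
      (ENNReal.rpow_le_rpow (min_le_left _ _) hl1'.le)
  have hbN : ∀ N, (∫⁻ x, fN N x) ^ l * (∫⁻ x, gN N x) ^ (1 - l) ≤ ∫⁻ x, h x := fun N =>
    pl1_bounded hl0 hl1 (hfNm N) (hgNm N) hh (hfNb N) (hgNb N) (hhypN N)
  have hmonof : Monotone fun N => fN N := by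
    intro N M hNM x
    exact min_le_min le_rfl (by exact_mod_cast Nat.cast_le.mpr hNM)
  have hmonog : Monotone fun N => gN N := by
    intro N M hNM x
    exact min_le_min le_rfl (by exact_mod_cast Nat.cast_le.mpr hNM)
  have hsupf : ∀ x, (⨆ N, fN N x) = f x := by
    intro x
    rw [hfN]
    simp only
    rw [← inf_iSup_eq (f x) (fun N : ℕ => (N : ℝ≥0∞)), ENNReal.iSup_natCast]
    simp
  have hsupg : ∀ x, (⨆ N, gN N x) = g x := by
    intro x
    rw [hgN]
    simp only
    rw [← inf_iSup_eq (g x) (fun N : ℕ => (N : ℝ≥0∞)), ENNReal.iSup_natCast]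
    simp
  have hif : (⨆ N, ∫⁻ x, fN N x) = ∫⁻ x, f x := by
    rw [← lintegral_iSup hfNm (fun N M hNM x => hmonof hNM x)]
    exact lintegral_congr hsupf
  have hig : (⨆ N, ∫⁻ x, gN N x) = ∫⁻ x, g x := by
    rw [← lintegral_iSup hgNm (fun N M hNM x => hmonog hNM x)]
    exact lintegral_congr hsupg
  have htf : Tendsto (fun N => ∫⁻ x, fN N x) atTop (nhds (∫⁻ x, f x)) := by
    rw [← hif]
    exact tendsto_atTop_iSup fun N M hNM => lintegral_mono fun x => hmonof hNM x
  have htg : Tendsto (fun N => ∫⁻ x, gN N x) atTop (nhds (∫⁻ x, g x)) := by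
    rw [← hig]
    exact tendsto_atTop_iSup fun N M hNM => lintegral_mono fun x => hmonog hNM x
  have ha0 : (∫⁻ x, f x) ^ l ≠ 0 := by
    simp only [ne_eq, ENNReal.rpow_eq_zero_iff, not_or]
    constructor
    · rintro ⟨hc, -⟩; exact hf0 hc
    · rintro ⟨-, hc⟩; linarith
  have hb0 : (∫⁻ x, g x) ^ (1 - l) ≠ 0 := by
    simp only [ne_eq, ENNReal.rpow_eq_zero_iff, not_or]
    constructor
    · rintro ⟨hc, -⟩; exact hg0 hc
    · rintro ⟨-, hc⟩; linarith
  have hlim : Tendsto (fun N => (∫⁻ x, fN N x) ^ l * (∫⁻ x, gN N x) ^ (1 - l)) atTop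
      (nhds ((∫⁻ x, f x) ^ l * (∫⁻ x, g x) ^ (1 - l))) := by
    refine ENNReal.Tendsto.mul ((ENNReal.continuous_rpow_const.tendsto _).comp htf)
      (Or.inl ha0) ((ENNReal.continuous_rpow_const.tendsto _).comp htg) (Or.inl hb0)
  exact le_of_tendsto hlim (Eventually.of_forall hbN)

def PLProp (α : Type*) [MeasureSpace α] [AddCommMonoid α] [Module ℝ α] : Prop :=
  ∀ (l : ℝ), 0 < l → l < 1 → ∀ f g h : α → ℝ≥0∞, Measurable f → Measurable g → Measurable h →
    (∀ x y, f x ^ l * g y ^ (1 - l) ≤ h (l • x + (1 - l) • y)) →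
    (∫⁻ x, f x) ^ l * (∫⁻ x, g x) ^ (1 - l) ≤ ∫⁻ x, h x

lemma plprop_real : PLProp ℝ := by
  intro l hl0 hl1 f g h mf mg mh hyp
  exact pl_dim1_s12 hl0 hl1 mf mg mh (by simpa [smul_eq_mul] using hyp)

lemma plprop_prod (α : Type*) [MeasureSpace α] [SigmaFinite (volume : Measure α)]
    [AddCommMonoid α] [Module ℝ α] (hα : PLProp α) : PLProp (ℝ × α) := by
  intro l hl0 hl1 f g h mf mg mh hyp
  have hl1' : (0:ℝ) < 1 - l := by linarith
  set F : ℝ → ℝ≥0∞ := fun t => ∫⁻ x, f (t, x) with hF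
  set G : ℝ → ℝ≥0∞ := fun t => ∫⁻ x, g (t, x) with hG
  set H : ℝ → ℝ≥0∞ := fun t => ∫⁻ x, h (t, x) with hH
  have mF : Measurable F := Measurable.lintegral_prod_right' mf
  have mG : Measurable G := Measurable.lintegral_prod_right' mg
  have mH : Measurable H := Measurable.lintegral_prod_right' mh
  have hypFGH : ∀ t₀ t₁, F t₀ ^ l * G t₁ ^ (1 - l) ≤ H (l * t₀ + (1 - l) * t₁) := by
    intro t₀ t₁
    refine hα l hl0 hl1 (fun x => f (t₀, x)) (fun y => g (t₁, y))
      (fun x => h (l * t₀ + (1 - l) * t₁, x)) (mf.comp measurable_prodMk_left)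
      (mg.comp measurable_prodMk_left) (mh.comp measurable_prodMk_left) ?_
    intro x y
    have := hyp (t₀, x) (t₁, y)
    simpa [Prod.smul_mk, Prod.mk_add_mk, smul_eq_mul] using this
  have key := pl_dim1_s12 hl0 hl1 mF mG mH hypFGH
  have hiF : (∫⁻ z, f z) = ∫⁻ t, F t := by
    rw [MeasureTheory.Measure.volume_eq_prod, lintegral_prod _ mf.aemeasurable]
  have hiG : (∫⁻ z, g z) = ∫⁻ t, G t := by
    rw [MeasureTheory.Measure.volume_eq_prod, lintegral_prod _ mg.aemeasurable]
  have hiH : (∫⁻ z, h z) = ∫⁻ t, H t := by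
    rw [MeasureTheory.Measure.volume_eq_prod, lintegral_prod _ mh.aemeasurable]
  rw [hiF, hiG, hiH]
  exact key

lemma plprop_transfer {α β : Type*} [MeasureSpace α] [MeasureSpace β]
    [AddCommMonoid α] [Module ℝ α] [AddCommMonoid β] [Module ℝ β]
    (e : β ≃ᵐ α) (he : MeasurePreserving e volume volume)
    (hlin : ∀ (a b : ℝ) (x y : β), e (a • x + b • y) = a • e x + b • e y)
    (hα : PLProp α) : PLProp β := by
  intro l hl0 hl1 f g h mf mg mh hyp
  have hsymm : ∀ (a b : ℝ) (u v : α), e.symm (a • u + b • v) = a • e.symm u + b • e.symm v := by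
    intro a b u v
    apply e.injective
    rw [hlin, e.apply_symm_apply, e.apply_symm_apply, e.apply_symm_apply]
  have key := hα l hl0 hl1 (f ∘ e.symm) (g ∘ e.symm) (h ∘ e.symm)
    (mf.comp e.symm.measurable) (mg.comp e.symm.measurable) (mh.comp e.symm.measurable) ?_
  · have h1 : ∀ u : β → ℝ≥0∞, Measurable u → (∫⁻ x, u x) = ∫⁻ y, (u ∘ e.symm) y := by
      intro u mu
      rw [← he.lintegral_comp (mu.comp e.symm.measurable)]
      simp
    rw [h1 f mf, h1 g mg, h1 h mh]
    exact key
  · intro u v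
    simp only [Function.comp]
    rw [hsymm]
    exact hyp (e.symm u) (e.symm v)

lemma plprop_pi : ∀ n : ℕ, PLProp (Fin n → ℝ) := by
  intro n
  induction n with
  | zero =>
      intro l hl0 hl1 f g h mf mg mh hyp
      have hl1' : (0:ℝ) < 1 - l := by linarith
      have huniv : (volume : Measure (Fin 0 → ℝ)) Set.univ = 1 := by
        simp [MeasureTheory.volume_pi, Measure.pi_univ]
      have hconst : ∀ u : (Fin 0 → ℝ) → ℝ≥0∞, (∫⁻ x, u x) = u default := by
        intro u
        rw [show u = fun _ => u default from funext fun x => by rw [Subsingleton.elim x default]]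
        rw [lintegral_const, huniv, mul_one]
      rw [hconst f, hconst g, hconst h]
      have := hyp default default
      rwa [Subsingleton.elim (l • (default : Fin 0 → ℝ) + (1 - l) • default) default] at this
  | succ n ih =>
      have e := MeasurableEquiv.piFinSuccAbove (fun _ : Fin (n + 1) => ℝ) 0
      refine plprop_transfer (MeasurableEquiv.piFinSuccAbove (fun _ : Fin (n + 1) => ℝ) 0)
        (volume_preserving_piFinSuccAbove (fun _ : Fin (n + 1) => ℝ) 0) ?_
        (plprop_prod _ ih)
      intro a b x y
      refine Prod.ext ?_ ?_
      · simp [MeasurableEquiv.piFinSuccAbove]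
      · funext j
        simp [MeasurableEquiv.piFinSuccAbove, Fin.removeNth, Fin.tail]

lemma plprop_euclidean (d : ℕ) : PLProp (EuclideanSpace ℝ (Fin d)) := by
  refine plprop_transfer (MeasurableEquiv.toLp 2 (Fin d → ℝ)).symm
    (EuclideanSpace.volume_preserving_symm_measurableEquiv_toLp (Fin d)) ?_ (plprop_pi d)
  intro a b x y
  rfl

/-- If `p > 0` and `q > 0` (jointly in `(z,x)`) are each log-concave
(`log` of the function is concave), then `(z,x) ↦ q(z|x) p(x)` is jointly log-concave,
and the induced marginal `z ↦ ∫ q(z|x) p(x) dx` is log-concave. -/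
theorem product_and_marginal_log_concave
    (d : ℕ)
    (p : EuclideanSpace ℝ (Fin d) → ℝ)
    (q : EuclideanSpace ℝ (Fin d) × EuclideanSpace ℝ (Fin d) → ℝ)
    (hp_pos : ∀ x, 0 < p x)
    (hq_pos : ∀ zx, 0 < q zx)
    (hp_lc : ConcaveOn ℝ Set.univ (fun x => Real.log (p x)))
    (hq_lc : ConcaveOn ℝ Set.univ (fun zx => Real.log (q zx)))
    (hint : ∀ z, Integrable (fun x => q (z, x) * p x)) :
    ConcaveOn ℝ Set.univ (fun zx : EuclideanSpace ℝ (Fin d) × EuclideanSpace ℝ (Fin d) =>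
        Real.log (q zx * p zx.2)) ∧
      ConcaveOn ℝ Set.univ (fun z => Real.log (∫ x, q (z, x) * p x)) := by
  have hE : True := trivial
  -- Part 1 : joint log-concavity of the product
  have hsnd : ConcaveOn ℝ (Set.univ : Set (EuclideanSpace ℝ (Fin d) × EuclideanSpace ℝ (Fin d))) (fun zx : EuclideanSpace ℝ (Fin d) × EuclideanSpace ℝ (Fin d) => Real.log (p zx.2)) := by
    have := hp_lc.comp_linearMap (LinearMap.snd ℝ (EuclideanSpace ℝ (Fin d)) (EuclideanSpace ℝ (Fin d)))
    exact this
  have part1 : ConcaveOn ℝ (Set.univ : Set (EuclideanSpace ℝ (Fin d) × EuclideanSpace ℝ (Fin d)))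
      (fun zx : EuclideanSpace ℝ (Fin d) × EuclideanSpace ℝ (Fin d) => Real.log (q zx * p zx.2)) := by
    have heq : (fun zx : EuclideanSpace ℝ (Fin d) × EuclideanSpace ℝ (Fin d) => Real.log (q zx * p zx.2))
        = fun zx : EuclideanSpace ℝ (Fin d) × EuclideanSpace ℝ (Fin d) => Real.log (q zx) + Real.log (p zx.2) := by
      funext zx
      exact Real.log_mul (hq_pos zx).ne' (hp_pos zx.2).ne'
    rw [heq]
    exact hq_lc.add hsnd
  refine ⟨part1, ?_⟩
  -- continuity of p and q
  have hp_cont : Continuous p := by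
    have hlog : Continuous fun x => Real.log (p x) :=
      hp_lc.locallyLipschitz.continuous
    have : p = fun x => Real.exp (Real.log (p x)) :=
      funext fun x => (Real.exp_log (hp_pos x)).symm
    rw [this]
    exact Real.continuous_exp.comp hlog
  have hq_cont : Continuous q := by
    have hlog : Continuous fun zx => Real.log (q zx) :=
      hq_lc.locallyLipschitz.continuous
    have : q = fun zx => Real.exp (Real.log (q zx)) :=
      funext fun zx => (Real.exp_log (hq_pos zx)).symm
    rw [this]
    exact Real.continuous_exp.comp hlog
  set M : EuclideanSpace ℝ (Fin d) → ℝ := fun z => ∫ x, q (z, x) * p x with hM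
  have hMpos : ∀ z, 0 < M z := by
    intro z
    rw [hM]
    refine (integral_pos_iff_support_of_nonneg ?_ (hint z)).mpr ?_
    · intro x
      exact (mul_pos (hq_pos (z, x)) (hp_pos x)).le
    · have : Function.support (fun x => q (z, x) * p x) = Set.univ := by
        ext x
        simp only [Function.mem_support, ne_eq, mem_univ, iff_true, mul_eq_zero, not_or]
        exact ⟨(hq_pos _).ne', (hp_pos _).ne'⟩
      rw [this]
      exact IsOpen.measure_pos volume isOpen_univ univ_nonempty
  -- main concavity
  refine ⟨convex_univ, ?_⟩
  rintro z₀ - z₁ - a b ha hb hab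
  rcases eq_or_lt_of_le ha with rfl | ha0
  · have hb1 : b = 1 := by linarith
    subst hb1
    simp
  rcases eq_or_lt_of_le hb with rfl | hb0
  · have ha1 : a = 1 := by linarith
    subst ha1
    simp
  have ha1 : a < 1 := by linarith
  have hbeq : b = 1 - a := by linarith
  subst hbeq
  -- the geometric-mean inequality for M
  have hkey : M z₀ ^ a * M z₁ ^ (1 - a) ≤ M (a • z₀ + (1 - a) • z₁) := by
    set zc := a • z₀ + (1 - a) • z₁ with hzc
    set φ : EuclideanSpace ℝ (Fin d) → EuclideanSpace ℝ (Fin d) → ℝ≥0∞ := fun z x => ENNReal.ofReal (q (z, x) * p x) with hφ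
    have hφm : ∀ z, Measurable (φ z) := by
      intro z
      apply ENNReal.measurable_ofReal.comp
      exact ((hq_cont.comp (Continuous.prodMk_right z)).mul hp_cont).measurable
    have hφint : ∀ z, (∫⁻ x, φ z x) = ENNReal.ofReal (M z) := by
      intro z
      rw [hM, ofReal_integral_eq_lintegral_ofReal (hint z)
        (Eventually.of_forall fun x => (mul_pos (hq_pos (z, x)) (hp_pos x)).le)]
    have hyp : ∀ x y : EuclideanSpace ℝ (Fin d), φ z₀ x ^ a * φ z₁ y ^ (1 - a) ≤ φ zc (a • x + (1 - a) • y) := by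
      intro x y
      have hconc := part1.2 (mem_univ (z₀, x)) (mem_univ (z₁, y)) ha hb hab
      have hsm : a • ((z₀, x) : EuclideanSpace ℝ (Fin d) × EuclideanSpace ℝ (Fin d)) + (1 - a) • ((z₁, y) : EuclideanSpace ℝ (Fin d) × EuclideanSpace ℝ (Fin d))
          = (zc, a • x + (1 - a) • y) := by
        rw [hzc]; rfl
      rw [hsm] at hconc
      -- hconc : a * log (q (z₀,x) * p x) + (1-a) * log (q (z₁,y) * p y)
      --   ≤ log (q (zc, a•x+(1-a)•y) * p (a•x+(1-a)•y))
      have hposu : 0 < q (z₀, x) * p x := mul_pos (hq_pos _) (hp_pos _)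
      have hposv : 0 < q (z₁, y) * p y := mul_pos (hq_pos _) (hp_pos _)
      have hposw : 0 < q (zc, a • x + (1 - a) • y) * p (a • x + (1 - a) • y) :=
        mul_pos (hq_pos _) (hp_pos _)
      have hreal : (q (z₀, x) * p x) ^ a * (q (z₁, y) * p y) ^ (1 - a)
          ≤ q (zc, a • x + (1 - a) • y) * p (a • x + (1 - a) • y) := by
        have h1 : (q (z₀, x) * p x) ^ a * (q (z₁, y) * p y) ^ (1 - a)
            = Real.exp (a * Real.log (q (z₀, x) * p x)
              + (1 - a) * Real.log (q (z₁, y) * p y)) := by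
          rw [Real.exp_add, Real.rpow_def_of_pos hposu, Real.rpow_def_of_pos hposv,
            mul_comm (Real.log _) a, mul_comm (Real.log _) (1 - a)]
        rw [h1, ← Real.exp_log hposw]
        exact Real.exp_le_exp.mpr hconc
      calc φ z₀ x ^ a * φ z₁ y ^ (1 - a)
          = ENNReal.ofReal ((q (z₀, x) * p x) ^ a * (q (z₁, y) * p y) ^ (1 - a)) := by
            rw [hφ]
            simp only
            rw [ENNReal.ofReal_mul (Real.rpow_nonneg hposu.le _),
              ENNReal.ofReal_rpow_of_pos hposu, ENNReal.ofReal_rpow_of_pos hposv]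
        _ ≤ φ zc (a • x + (1 - a) • y) := ENNReal.ofReal_le_ofReal hreal
    have := plprop_euclidean d a ha0 ha1 (φ z₀) (φ z₁) (φ zc)
      (hφm z₀) (hφm z₁) (hφm zc) hyp
    rw [hφint z₀, hφint z₁, hφint zc] at this
    have hconv : ENNReal.ofReal (M z₀ ^ a * M z₁ ^ (1 - a)) ≤ ENNReal.ofReal (M zc) := by
      rw [ENNReal.ofReal_mul (Real.rpow_nonneg (hMpos z₀).le _),
        ← ENNReal.ofReal_rpow_of_pos (hMpos z₀), ← ENNReal.ofReal_rpow_of_pos (hMpos z₁)]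
      exact this
    exact (ENNReal.ofReal_le_ofReal_iff (hMpos zc).le).mp hconv
  -- take logarithms
  have hlog := Real.log_le_log (mul_pos (Real.rpow_pos_of_pos (hMpos z₀) a)
    (Real.rpow_pos_of_pos (hMpos z₁) (1 - a))) hkey
  rw [Real.log_mul (Real.rpow_pos_of_pos (hMpos z₀) a).ne'
      (Real.rpow_pos_of_pos (hMpos z₁) (1 - a)).ne',
    Real.log_rpow (hMpos z₀), Real.log_rpow (hMpos z₁)] at hlog
  simpa [smul_eq_mul] using hlog
end
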